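/- arXiv:1610.01116 — 10 statements merged into one kernel-verified Lean document; each statement's English description precedes it below -/
import Mathlib

section
/- Let α and β be nonincreasing integer sequences of length n with α ≽ β. If ω₁ = {i₁,…,i_k} and ω₂ = {j₁,…,j_k} are sets of k distinct indices with i₁ ≥ j₁, …, i_k ≥ j_k, then the sequence obtained from α by subtracting 1 at each index of ω₁ majorizes the sequence obtained from β by subtracting 1 at each index of ω₂, and likewise the sequence obtained from α by adding 1 at each index of ω₂ majorizes the sequence obtained from β by adding 1 at each index of ω₁. -/
/-- `G` is a (labeled) realization of the degree sequence `α` if the degree of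
vertex `v` in `G` equals `α v` for every `v`. -/
def IsRealization {n : ℕ} (α : Fin n → ℕ) (G : SimpleGraph (Fin n)) : Prop :=
  ∀ v : Fin n, (G.neighborSet v).ncard = α v

/-- A sequence is graphic if it has a realization. -/
def Graphic {n : ℕ} (α : Fin n → ℕ) : Prop :=
  ∃ G : SimpleGraph (Fin n), IsRealization α G

/-- The edge `{i,j}` is forced for `α` if it lies in every realization of `α`. -/
def ForcedEdge {n : ℕ} (α : Fin n → ℕ) (i j : Fin n) : Prop :=
  ∀ G : SimpleGraph (Fin n), IsRealization α G → G.Adj i j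

/-- The edge `{i,j}` is forbidden for `α` if it lies in no realization of `α`. -/
def ForbiddenEdge {n : ℕ} (α : Fin n → ℕ) (i j : Fin n) : Prop :=
  ∀ G : SimpleGraph (Fin n), IsRealization α G → ¬ G.Adj i j

/-- `α` majorizes `β`: every partial sum of `α` is at least the corresponding
partial sum of `β`, and the total sums agree. -/
def Majorizes {n : ℕ} (α β : Fin n → ℕ) : Prop :=
  (∀ k : ℕ, k ≤ n →
    ∑ i ∈ Finset.univ.filter (fun i : Fin n => (i : ℕ) < k), β i ≤
    ∑ i ∈ Finset.univ.filter (fun i : Fin n => (i : ℕ) < k), α i) ∧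
  ∑ i, α i = ∑ i, β i


lemma sub_sum {n k : ℕ} (γ : Fin n → ℕ) (f : Fin k → Fin n) (hf : Function.Injective f)
    (hpos : ∀ t, 1 ≤ γ (f t)) (m : ℕ) :
    ∑ v ∈ Finset.univ.filter (fun v : Fin n => (v : ℕ) < m),
      (if v ∈ Finset.image f Finset.univ then γ v - 1 else γ v) =
    ∑ v ∈ Finset.univ.filter (fun v : Fin n => (v : ℕ) < m), γ v
      - (Finset.univ.filter (fun t : Fin k => ((f t : ℕ) < m))).card := by
  have h1 : ∀ v ∈ Finset.univ.filter (fun v : Fin n => (v : ℕ) < m),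
      (if v ∈ Finset.image f Finset.univ then γ v - 1 else γ v)
      = γ v - (if v ∈ Finset.image f Finset.univ then 1 else 0) := by
    intro v _; split <;> simp
  rw [Finset.sum_congr rfl h1, Finset.sum_tsub_distrib, Finset.sum_ite_mem]
  · congr 1
    rw [Finset.sum_const, smul_eq_mul, mul_one, ← Finset.card_image_of_injective _ hf]
    congr 1
    ext v
    simp only [Finset.mem_inter, Finset.mem_filter, Finset.mem_image, Finset.mem_univ,
      true_and]
    constructor
    · rintro ⟨hv, t, rfl⟩; exact ⟨t, hv, rfl⟩
    · rintro ⟨t, ht, rfl⟩; exact ⟨ht, t, rfl⟩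
  · intro v hv
    split
    · next hv' =>
      obtain ⟨t, -, rfl⟩ := Finset.mem_image.mp hv'
      exact hpos t
    · exact Nat.zero_le _

lemma add_sum {n k : ℕ} (γ : Fin n → ℕ) (f : Fin k → Fin n) (hf : Function.Injective f) (m : ℕ) :
    ∑ v ∈ Finset.univ.filter (fun v : Fin n => (v : ℕ) < m),
      (if v ∈ Finset.image f Finset.univ then γ v + 1 else γ v) =
    ∑ v ∈ Finset.univ.filter (fun v : Fin n => (v : ℕ) < m), γ v
      + (Finset.univ.filter (fun t : Fin k => ((f t : ℕ) < m))).card := by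
  have h1 : ∀ v ∈ Finset.univ.filter (fun v : Fin n => (v : ℕ) < m),
      (if v ∈ Finset.image f Finset.univ then γ v + 1 else γ v)
      = γ v + (if v ∈ Finset.image f Finset.univ then 1 else 0) := by
    intro v _; split <;> simp
  rw [Finset.sum_congr rfl h1, Finset.sum_add_distrib, Finset.sum_ite_mem]
  congr 1
  rw [Finset.sum_const, smul_eq_mul, mul_one, ← Finset.card_image_of_injective _ hf]
  congr 1
  ext v
  simp only [Finset.mem_inter, Finset.mem_filter, Finset.mem_image, Finset.mem_univ, true_and]
  constructor
  · rintro ⟨hv, t, rfl⟩; exact ⟨t, hv, rfl⟩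
  · rintro ⟨t, ht, rfl⟩; exact ⟨ht, t, rfl⟩

/-- Fulkerson–Ryser: if `α ≽ β` are nonincreasing sequences, and
`ω₁ = {i₁,…,i_k}`, `ω₂ = {j₁,…,j_k}` are sets of `k` distinct indices with
`i_t ≥ j_t` for every `t` (all entries involved staying within `0` and `n-1`),
then `⊖_{ω₁} α ≽ ⊖_{ω₂} β` and `⊕_{ω₂} α ≽ ⊕_{ω₁} β`. -/
theorem fulkerson_ryser {n k : ℕ} (α β : Fin n → ℕ)
    (hα : Antitone α) (hβ : Antitone β)
    (i : Fin k → Fin n) (j : Fin k → Fin n)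
    (hi : Function.Injective i) (hj : Function.Injective j)
    (hij : ∀ t : Fin k, j t ≤ i t)
    (hαpos : ∀ t : Fin k, 1 ≤ α (i t)) (hβpos : ∀ t : Fin k, 1 ≤ β (j t))
    (hαub : ∀ t : Fin k, α (j t) + 1 ≤ n - 1) (hβub : ∀ t : Fin k, β (i t) + 1 ≤ n - 1)
    (h : Majorizes α β) :
    Majorizes (fun v : Fin n => if v ∈ Finset.image i Finset.univ then α v - 1 else α v)
        (fun v : Fin n => if v ∈ Finset.image j Finset.univ then β v - 1 else β v) ∧
    Majorizes (fun v : Fin n => if v ∈ Finset.image j Finset.univ then α v + 1 else α v)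
        (fun v : Fin n => if v ∈ Finset.image i Finset.univ then β v + 1 else β v) := by
  obtain ⟨hmaj, htot⟩ := h
  have hcard : ∀ m : ℕ,
      (Finset.univ.filter (fun t : Fin k => ((i t : ℕ) < m))).card ≤
      (Finset.univ.filter (fun t : Fin k => ((j t : ℕ) < m))).card := by
    intro m
    apply Finset.card_le_card
    intro t ht
    simp only [Finset.mem_filter, Finset.mem_univ, true_and] at *
    exact lt_of_le_of_lt (hij t) ht
  have sumeq : ∀ γ : Fin n → ℕ,
      ∑ v, γ v = ∑ v ∈ Finset.univ.filter (fun v : Fin n => (v : ℕ) < n), γ v := by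
    intro γ
    apply Finset.sum_congr _ (fun _ _ => rfl)
    ext v
    simp [v.is_lt]
  have hkcard : ∀ f : Fin k → Fin n,
      (Finset.univ.filter (fun t : Fin k => ((f t : ℕ) < n))).card = k := by
    intro f
    have : Finset.univ.filter (fun t : Fin k => ((f t : ℕ) < n)) = Finset.univ := by
      ext t; simp [(f t).is_lt]
    rw [this, Finset.card_univ, Fintype.card_fin]
  constructor
  · refine ⟨fun m hm => ?_, ?_⟩
    · rw [sub_sum α i hi hαpos m, sub_sum β j hj hβpos m]
      exact tsub_le_tsub (hmaj m hm) (hcard m)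
    · rw [sumeq, sumeq, sub_sum α i hi hαpos n, sub_sum β j hj hβpos n,
        hkcard i, hkcard j, ← sumeq α, ← sumeq β, htot]
  · refine ⟨fun m hm => ?_, ?_⟩
    · rw [add_sum α j hj m, add_sum β i hi m]
      exact Nat.add_le_add (hmaj m hm) (hcard m)
    · rw [sumeq, sumeq, add_sum α j hj n, add_sum β i hi n,
        hkcard i, hkcard j, ← sumeq α, ← sumeq β, htot]
end

section
/- If α is a graphic sequence of length n and α majorizes β (where β is a nonincreasing sequence of length n with the same total sum and dominated partial sums), then β is graphic. -/
/-- The graph obtained from `G` by removing the edge `ik` and adding the edge `jk`. -/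
def switchGraph {V : Type*} (G : SimpleGraph V) (i j k : V) (hjk : j ≠ k) : SimpleGraph V where
  Adj a b :=
    (G.Adj a b ∧ ¬((a = i ∧ b = k) ∨ (a = k ∧ b = i))) ∨
      ((a = j ∧ b = k) ∨ (a = k ∧ b = j))
  symm := by
    refine ⟨?_⟩
    intro a b hab
    rcases hab with ⟨h1, h2⟩ | h3
    · exact Or.inl ⟨h1.symm, by tauto⟩
    · exact Or.inr (by tauto)
  loopless := by
    refine ⟨?_⟩
    intro a ha
    rcases ha with ⟨h1, _⟩ | ⟨⟨h1, h2⟩ | ⟨h1, h2⟩⟩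
    · exact G.loopless.irrefl a h1
    · exact hjk (h1 ▸ h2 ▸ rfl)
    · exact hjk (h2 ▸ h1 ▸ rfl)

lemma switchGraph_adj {V : Type*} (G : SimpleGraph V) (i j k : V) (hjk : j ≠ k) (a b : V) :
    (switchGraph G i j k hjk).Adj a b ↔
      (G.Adj a b ∧ ¬((a = i ∧ b = k) ∨ (a = k ∧ b = i))) ∨
        ((a = j ∧ b = k) ∨ (a = k ∧ b = j)) := Iff.rfl

lemma graphic_transfer {n : ℕ} {α : Fin n → ℕ} {i j : Fin n} (hij : i ≠ j)
    (hdeg : α j + 2 ≤ α i) (hg : Graphic α) :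
    Graphic (Function.update (Function.update α i (α i - 1)) j (α j + 1)) := by
  obtain ⟨G, hG⟩ := hg
  have hex : ∃ k, k ∈ G.neighborSet i \ {j} ∧ k ∉ G.neighborSet j := by
    by_contra hc
    push_neg at hc
    have hsub : G.neighborSet i \ {j} ⊆ G.neighborSet j := fun k hk => hc k hk
    have h1 : (G.neighborSet i \ {j}).ncard ≤ α j := by
      have := Set.ncard_le_ncard hsub (Set.toFinite _)
      rwa [hG j] at this
    have h2 : α i - 1 ≤ (G.neighborSet i \ {j}).ncard := by
      have := Set.pred_ncard_le_ncard_diff_singleton (G.neighborSet i) j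
      rwa [hG i] at this
    omega
  obtain ⟨k, ⟨hki, hkj⟩, hkadj⟩ := hex
  simp only [Set.mem_singleton_iff] at hkj
  have hik : i ≠ k := fun h => G.loopless.irrefl i (h ▸ hki)
  have hjk : j ≠ k := fun h => hkj h.symm
  have hkadj' : ¬ G.Adj k j := fun h => hkadj h.symm
  have hkiadj : G.Adj i k := hki
  refine ⟨switchGraph G i j k hjk, ?_⟩
  intro v
  by_cases hvi : v = i
  · rw [hvi]
    have hns : (switchGraph G i j k hjk).neighborSet i = G.neighborSet i \ {k} := by
      ext b
      simp only [SimpleGraph.mem_neighborSet, switchGraph_adj, Set.mem_diff,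
        Set.mem_singleton_iff]
      constructor
      · rintro (⟨h1, h2⟩ | ⟨⟨h1, h2⟩ | ⟨h1, h2⟩⟩)
        · exact ⟨h1, by tauto⟩
        · exact absurd h1 hij
        · exact absurd h1 hik
      · rintro ⟨h1, h2⟩
        exact Or.inl ⟨h1, by tauto⟩
    rw [hns, Set.ncard_diff_singleton_of_mem hki, hG i,
      Function.update_of_ne hij, Function.update_self]
  · by_cases hvj : v = j
    · rw [hvj]
      have hns : (switchGraph G i j k hjk).neighborSet j = insert k (G.neighborSet j) := by
        ext b
        simp only [SimpleGraph.mem_neighborSet, switchGraph_adj, Set.mem_insert_iff]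
        constructor
        · rintro (⟨h1, h2⟩ | ⟨⟨h1, h2⟩ | ⟨h1, h2⟩⟩)
          · exact Or.inr h1
          · exact Or.inl h2
          · exact absurd h1 hjk
        · rintro (rfl | h1)
          · exact Or.inr (by tauto)
          · exact Or.inl ⟨h1, by rintro (⟨h2, h3⟩ | ⟨h2, h3⟩) <;> [exact hij h2.symm; exact hjk h2]⟩
      rw [hns, Set.ncard_insert_of_notMem hkadj, hG j, Function.update_self]
    · by_cases hvk : v = k
      · rw [hvk]
        have hns : (switchGraph G i j k hjk).neighborSet k =
            insert j (G.neighborSet k \ {i}) := by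
          ext b
          simp only [SimpleGraph.mem_neighborSet, switchGraph_adj, Set.mem_insert_iff,
            Set.mem_diff, Set.mem_singleton_iff]
          constructor
          · rintro (⟨h1, h2⟩ | ⟨⟨h1, h2⟩ | ⟨h1, h2⟩⟩)
            · exact Or.inr ⟨h1, by tauto⟩
            · exact absurd h1.symm hjk
            · exact Or.inl h2
          · rintro (rfl | ⟨h1, h2⟩)
            · exact Or.inr (by tauto)
            · exact Or.inl ⟨h1, by tauto⟩
        have hikmem : i ∈ G.neighborSet k := hkiadj.symm
        have hjnot : j ∉ G.neighborSet k \ {i} := fun h => hkadj' h.1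
        have hpos : 0 < (G.neighborSet k).ncard := by
          rw [Set.ncard_pos]; exact ⟨i, hikmem⟩
        rw [hG k] at hpos
        rw [hns, Set.ncard_insert_of_notMem hjnot, Set.ncard_diff_singleton_of_mem hikmem,
          hG k, Function.update_of_ne (Ne.symm hjk), Function.update_of_ne (Ne.symm hik)]
        omega
      · have hns : (switchGraph G i j k hjk).neighborSet v = G.neighborSet v := by
          ext b
          simp only [SimpleGraph.mem_neighborSet, switchGraph_adj]
          constructor
          · rintro (⟨h1, h2⟩ | ⟨⟨h1, h2⟩ | ⟨h1, h2⟩⟩)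
            · exact h1
            · exact absurd h1 hvj
            · exact absurd h1 hvk
          · intro h1
            exact Or.inl ⟨h1, by tauto⟩
        rw [hns, hG v, Function.update_of_ne hvj, Function.update_of_ne hvi]

/-- partial sum of the first `k` values -/
def psum {n : ℕ} (f : Fin n → ℕ) (k : ℕ) : ℕ :=
  ∑ i ∈ Finset.univ.filter (fun i : Fin n => (i : ℕ) < k), f i

lemma psum_succ {n : ℕ} (f : Fin n → ℕ) {k : ℕ} (hk : k < n) :
    psum f (k + 1) = psum f k + f ⟨k, hk⟩ := by
  have hset : Finset.univ.filter (fun i : Fin n => (i : ℕ) < k + 1) =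
      insert ⟨k, hk⟩ (Finset.univ.filter (fun i : Fin n => (i : ℕ) < k)) := by
    ext m
    simp only [Finset.mem_filter, Finset.mem_univ, true_and, Finset.mem_insert, Fin.ext_iff]
    omega
  rw [psum, hset, Finset.sum_insert (by simp), psum, add_comm]

lemma psum_top {n : ℕ} (f : Fin n → ℕ) : psum f n = ∑ i, f i := by
  unfold psum
  congr 1
  ext m
  simp [m.isLt]

/-- total discrepancy -/
def Dd {n : ℕ} (α β : Fin n → ℕ) : ℕ :=
  ∑ k ∈ Finset.range (n + 1), (psum α k - psum β k)

lemma step {n : ℕ} (α β : Fin n → ℕ) (hα : Antitone α) (hβ : Antitone β)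
    (h : Majorizes α β) (hne : α ≠ β) :
    ∃ α' : Fin n → ℕ, Antitone α' ∧ Majorizes α' β ∧
      Dd α' β < Dd α β ∧ (Graphic α → Graphic α') := by
  obtain ⟨hmaj, hsum⟩ := h
  have hmaj' : ∀ k, k ≤ n → psum β k ≤ psum α k := hmaj
  have hs : (Finset.univ.filter (fun i : Fin n => α i ≠ β i)).Nonempty := by
    rw [Function.ne_iff] at hne
    obtain ⟨i, hi⟩ := hne
    exact ⟨i, by simp [hi]⟩
  set i₀ := Finset.min' _ hs with hi₀def
  have hi₀mem : α i₀ ≠ β i₀ := by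
    have := Finset.min'_mem _ hs
    simpa using this
  have hi₀min : ∀ m : Fin n, α m ≠ β m → i₀ ≤ m := fun m hm =>
    Finset.min'_le _ m (by simp [hm])
  have hA : ∀ m : Fin n, m < i₀ → α m = β m := fun m hm => by
    by_contra hc
    exact absurd (hi₀min m hc) (not_le.mpr hm)
  have hPi₀ : psum α (i₀ : ℕ) = psum β (i₀ : ℕ) := by
    refine Finset.sum_congr rfl fun m hm => ?_
    have hmk : (m : ℕ) < (i₀ : ℕ) := (Finset.mem_filter.mp hm).2
    exact hA m (by rwa [Fin.lt_def])
  have hB : β i₀ < α i₀ := by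
    have h1 := hmaj' ((i₀ : ℕ) + 1) (by have := i₀.isLt; omega)
    rw [psum_succ α i₀.isLt, psum_succ β i₀.isLt] at h1
    simp only [Fin.eta] at h1
    omega
  have ht : (Finset.univ.filter (fun i : Fin n => α i < β i)).Nonempty := by
    by_contra hc
    rw [Finset.not_nonempty_iff_eq_empty, Finset.filter_eq_empty_iff] at hc
    have hle : ∀ i : Fin n, β i ≤ α i := fun i => not_lt.mp (hc (Finset.mem_univ i))
    have : ∑ i, β i < ∑ i, α i :=
      Finset.sum_lt_sum (fun i _ => hle i) ⟨i₀, Finset.mem_univ _, hB⟩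
    omega
  set j₀ := Finset.min' _ ht with hj₀def
  have hj₀mem : α j₀ < β j₀ := by
    have := Finset.min'_mem _ ht
    simpa using this
  have hj₀min : ∀ m : Fin n, α m < β m → j₀ ≤ m := fun m hm =>
    Finset.min'_le _ m (by simp [hm])
  have hE : ∀ m : Fin n, m < j₀ → β m ≤ α m := fun m hm => by
    by_contra hc
    exact absurd (hj₀min m (not_le.mp hc)) (not_le.mpr hm)
  have hij₀ : i₀ < j₀ := by
    rcases lt_trichotomy i₀ j₀ with h' | h' | h'
    · exact h'
    · exfalso; rw [h'] at hB; omega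
    · exfalso; have := hA j₀ h'; omega
  have hi'ne : (Finset.univ.filter (fun x : Fin n => α x = α i₀)).Nonempty := ⟨i₀, by simp⟩
  set i' := Finset.max' _ hi'ne with hi'def
  have hi'val : α i' = α i₀ := by
    have := Finset.max'_mem _ hi'ne
    simpa using this
  have hi'max : ∀ m : Fin n, α m = α i₀ → m ≤ i' := fun m hm =>
    Finset.le_max' _ m (by simp [hm])
  have hj'ne : (Finset.univ.filter (fun x : Fin n => α x = α j₀)).Nonempty := ⟨j₀, by simp⟩
  set j' := Finset.min' _ hj'ne with hj'def
  have hj'val : α j' = α j₀ := by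
    have := Finset.min'_mem _ hj'ne
    simpa using this
  have hj'min : ∀ m : Fin n, α m = α j₀ → j' ≤ m := fun m hm =>
    Finset.min'_le _ m (by simp [hm])
  have hj'le : j' ≤ j₀ := hj'min j₀ rfl
  have hi₀le : i₀ ≤ i' := hi'max i₀ rfl
  have hgap : α j' + 2 ≤ α i' := by
    have h1 : β j₀ ≤ β i₀ := hβ hij₀.le
    omega
  have hij' : i' < j' := by
    by_contra hc
    push_neg at hc
    have := hα hc
    omega
  have hmaxprop : ∀ m : Fin n, i' < m → α m < α i' := fun m hm => by
    rcases (hα hm.le).lt_or_eq with h2 | h2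
    · exact h2
    · exact absurd (hi'max m (h2.trans hi'val)) (not_le.mpr hm)
  have hminprop : ∀ m : Fin n, m < j' → α j' < α m := fun m hm => by
    rcases (hα hm.le).lt_or_eq with h2 | h2
    · exact h2
    · exact absurd (hj'min m (h2.symm.trans hj'val)) (not_le.mpr hm)
  set α' := Function.update (Function.update α i' (α i' - 1)) j' (α j' + 1) with hα'def
  have hne' : i' ≠ j' := hij'.ne
  have hα'i : α' i' = α i' - 1 := by
    rw [hα'def, Function.update_of_ne hne', Function.update_self]
  have hα'j : α' j' = α j' + 1 := Function.update_self _ _ _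
  have hα'other : ∀ m, m ≠ i' → m ≠ j' → α' m = α m := fun m h1 h2 => by
    rw [hα'def, Function.update_of_ne h2, Function.update_of_ne h1]
  have hant : Antitone α' := by
    intro a b hab
    rcases eq_or_ne a i' with rfl | hai
    · rcases eq_or_ne b i' with rfl | hbi
      · exact le_rfl
      rcases eq_or_ne b j' with rfl | hbj
      · rw [hα'i, hα'j]; omega
      · rw [hα'i, hα'other b hbi hbj]
        have hb : i' < b := lt_of_le_of_ne hab (Ne.symm hbi)
        have := hmaxprop b hb
        omega
    rcases eq_or_ne a j' with rfl | haj
    · rcases eq_or_ne b i' with rfl | hbi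
      · exact absurd hab (not_le.mpr hij')
      rcases eq_or_ne b j' with rfl | hbj
      · exact le_rfl
      · rw [hα'j, hα'other b hbi hbj]
        have := hα hab
        omega
    · rcases eq_or_ne b i' with rfl | hbi
      · rw [hα'other a hai haj, hα'i]
        have := hα hab
        omega
      rcases eq_or_ne b j' with rfl | hbj
      · rw [hα'other a hai haj, hα'j]
        have ha : a < j' := lt_of_le_of_ne hab haj
        have := hminprop a ha
        omega
      · rw [hα'other a hai haj, hα'other b hbi hbj]
        exact hα hab
  have hii' : (i' : ℕ) < (j' : ℕ) := hij'
  have hpa : ∀ k : ℕ, k ≤ (i' : ℕ) → psum α' k = psum α k := by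
    intro k hk
    refine Finset.sum_congr rfl fun m hm => ?_
    have hmk : (m : ℕ) < k := (Finset.mem_filter.mp hm).2
    have h1 : m ≠ i' := by intro hh; rw [hh] at hmk; omega
    have h2 : m ≠ j' := by intro hh; rw [hh] at hmk; omega
    exact hα'other m h1 h2
  have hpb : ∀ k : ℕ, (i' : ℕ) < k → k ≤ (j' : ℕ) → psum α' k + 1 = psum α k := by
    intro k hk1 hk2
    have hi'mem : i' ∈ Finset.univ.filter (fun i : Fin n => (i : ℕ) < k) := by
      simp [hk1]
    rw [psum, psum, ← Finset.sum_erase_add _ _ hi'mem, ← Finset.sum_erase_add _ α hi'mem]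
    have hcong : ∑ m ∈ (Finset.univ.filter (fun i : Fin n => (i : ℕ) < k)).erase i', α' m =
        ∑ m ∈ (Finset.univ.filter (fun i : Fin n => (i : ℕ) < k)).erase i', α m := by
      refine Finset.sum_congr rfl fun m hm => ?_
      have hmi : m ≠ i' := Finset.ne_of_mem_erase hm
      have hmk : (m : ℕ) < k := (Finset.mem_filter.mp (Finset.mem_of_mem_erase hm)).2
      have hmj : m ≠ j' := by intro hh; rw [hh] at hmk; omega
      exact hα'other m hmi hmj
    rw [hcong, hα'i]
    omega
  have hpc : ∀ k : ℕ, (j' : ℕ) < k → psum α' k = psum α k := by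
    intro k hk
    have hj'mem : j' ∈ Finset.univ.filter (fun i : Fin n => (i : ℕ) < k) := by
      simp [hk]
    have hi'mem : i' ∈ (Finset.univ.filter (fun i : Fin n => (i : ℕ) < k)).erase j' := by
      refine Finset.mem_erase.mpr ⟨hne', ?_⟩
      simp only [Finset.mem_filter, Finset.mem_univ, true_and]
      omega
    rw [psum, psum, ← Finset.sum_erase_add _ _ hj'mem, ← Finset.sum_erase_add _ α hj'mem,
      ← Finset.sum_erase_add _ _ hi'mem, ← Finset.sum_erase_add _ α hi'mem]
    have hcong : ∑ m ∈ ((Finset.univ.filter (fun i : Fin n => (i : ℕ) < k)).erase j').erase i',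
        α' m =
        ∑ m ∈ ((Finset.univ.filter (fun i : Fin n => (i : ℕ) < k)).erase j').erase i', α m := by
      refine Finset.sum_congr rfl fun m hm => ?_
      have hmi : m ≠ i' := Finset.ne_of_mem_erase hm
      have hmj : m ≠ j' := Finset.ne_of_mem_erase (Finset.mem_of_mem_erase hm)
      exact hα'other m hmi hmj
    rw [hcong, hα'i, hα'j]
    omega
  have hstrict : ∀ k : ℕ, (i₀ : ℕ) < k → k ≤ (j₀ : ℕ) → psum β k < psum α k := by
    intro k hk1 hk2
    apply Finset.sum_lt_sum
    · intro m hm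
      have hmk : (m : ℕ) < k := (Finset.mem_filter.mp hm).2
      exact hE m (by rw [Fin.lt_def]; omega)
    · exact ⟨i₀, by simp [hk1], hB⟩
  have hi₀le' : (i₀ : ℕ) ≤ (i' : ℕ) := hi₀le
  have hj'le' : (j' : ℕ) ≤ (j₀ : ℕ) := hj'le
  have hmaj2 : Majorizes α' β := by
    constructor
    · intro k hk
      show psum β k ≤ psum α' k
      rcases le_or_gt k (i' : ℕ) with h' | h'
      · rw [hpa k h']; exact hmaj' k hk
      rcases le_or_gt k (j' : ℕ) with h'' | h''
      · have h1 : psum β k < psum α k := hstrict k (by omega) (by omega)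
        have h2 := hpb k h' h''
        omega
      · rw [hpc k h'']; exact hmaj' k hk
    · show ∑ i, α' i = ∑ i, β i
      have h1 : psum α' n = psum α n := hpc n j'.isLt
      rw [psum_top, psum_top] at h1
      rw [h1]
      exact hsum
  have hD : Dd α' β < Dd α β := by
    apply Finset.sum_lt_sum
    · intro k _
      have hle : psum α' k ≤ psum α k := by
        rcases le_or_gt k (i' : ℕ) with h' | h'
        · rw [hpa k h']
        rcases le_or_gt k (j' : ℕ) with h'' | h''
        · have := hpb k h' h''; omega
        · rw [hpc k h'']
      omega
    · refine ⟨(j' : ℕ), Finset.mem_range.mpr (by have := j'.isLt; omega), ?_⟩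
      have h1 := hpb (j' : ℕ) hii' le_rfl
      have h2 : psum β (j' : ℕ) < psum α (j' : ℕ) := hstrict _ (by omega) (by omega)
      omega
  exact ⟨α', hant, hmaj2, hD, fun hg => graphic_transfer hne' hgap hg⟩

/-- Ruch–Gutman: if the nonincreasing sequence `α` is graphic and
`α` majorizes the nonincreasing sequence `β`, then `β` is graphic. -/
theorem majorized_by_graphic_is_graphic {n : ℕ} (α β : Fin n → ℕ)
    (hα : Antitone α) (hβ : Antitone β)
    (hαg : Graphic α) (h : Majorizes α β) :
    Graphic β := by
  suffices H : ∀ d : ℕ, ∀ α : Fin n → ℕ, Antitone α → Graphic α → Majorizes α β →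
      Dd α β = d → Graphic β from H (Dd α β) α hα hαg h rfl
  intro d
  induction d using Nat.strong_induction_on with
  | _ d ih =>
    intro α hα hαg hmaj hD
    by_cases hne : α = β
    · rwa [hne] at hαg
    · obtain ⟨α', hα', hmaj', hlt, hg⟩ := step α β hα hβ hmaj hne
      exact ih (Dd α' β) (hD ▸ hlt) α' hα' (hg hαg) hmaj' rfl
end

section
/- Let α be a nonincreasing sequence of length n with entries at most n−1 and let i be an index. Let α' be the sequence created from α by subtracting 1 from the first α_i entries of α other than the entry at index i (i.e., from the α_i largest-indexed-first entries, skipping index i) and then setting the entry at index i to 0. Then α is graphic if and only if α' is graphic. -/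
set_option maxHeartbeats 2000000

set_option maxHeartbeats 2000000

lemma ncard_swap {n : ℕ} {X : Set (Fin n)} {a b : Fin n} (ha : a ∈ X) (hb : b ∉ X) :
    (insert b (X \ {a})).ncard = X.ncard := by
  have h1 : b ∉ X \ {a} := fun h => hb h.1
  rw [Set.ncard_insert_of_notMem h1, Set.ncard_diff_singleton_of_mem ha]
  have : 0 < X.ncard := (Set.ncard_pos (Set.toFinite X)).mpr ⟨a, ha⟩
  omega

lemma swap_lemma {n : ℕ} (G : SimpleGraph (Fin n)) {i s t u : Fin n}
    (his : ¬ G.Adj i s) (hit : G.Adj i t) (hsu : G.Adj s u) (htu : ¬ G.Adj t u)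
    (hne_is : i ≠ s) (hne_st : s ≠ t) (hne_iu : i ≠ u) (hne_tu : t ≠ u) :
    ∃ G₂ : SimpleGraph (Fin n),
      (∀ v, (G₂.neighborSet v).ncard = (G.neighborSet v).ncard) ∧
      G₂.neighborSet i = insert s (G.neighborSet i \ {t}) := by
  have hne_it : i ≠ t := hit.ne
  have hne_su : s ≠ u := hsu.ne
  have hne_ti : t ≠ i := hne_it.symm
  have hne_us : u ≠ s := hne_su.symm
  have hne_si : s ≠ i := hne_is.symm
  have hne_ts : t ≠ s := hne_st.symm
  have hne_ui : u ≠ i := hne_iu.symm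
  have hne_ut : u ≠ t := hne_tu.symm
  set G₂ : SimpleGraph (Fin n) :=
    { Adj := fun a b => (G.Adj a b ∧
        ¬((a = i ∧ b = t) ∨ (a = t ∧ b = i) ∨ (a = s ∧ b = u) ∨ (a = u ∧ b = s))) ∨
        ((a = i ∧ b = s) ∨ (a = s ∧ b = i) ∨ (a = t ∧ b = u) ∨ (a = u ∧ b = t))
      symm := by
        constructor
        intro a b h
        rcases h with ⟨hab, hP⟩ | hQ
        · exact Or.inl ⟨hab.symm, by tauto⟩
        · exact Or.inr (by tauto)
      loopless := by
        constructor
        intro a h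
        rcases h with ⟨hab, _⟩ | hQ
        · exact G.loopless.irrefl a hab
        · rcases hQ with ⟨h1, h2⟩ | ⟨h1, h2⟩ | ⟨h1, h2⟩ | ⟨h1, h2⟩ <;> subst h1 <;>
            simp_all } with hG₂
  have adj2 : ∀ a b, G₂.Adj a b ↔ (G.Adj a b ∧
        ¬((a = i ∧ b = t) ∨ (a = t ∧ b = i) ∨ (a = s ∧ b = u) ∨ (a = u ∧ b = s))) ∨
        ((a = i ∧ b = s) ∨ (a = s ∧ b = i) ∨ (a = t ∧ b = u) ∨ (a = u ∧ b = t)) := by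
    intro a b; rw [hG₂]
  have hNi : G₂.neighborSet i = insert s (G.neighborSet i \ {t}) := by
    ext b
    simp only [SimpleGraph.mem_neighborSet, adj2, Set.mem_insert_iff, Set.mem_diff,
      Set.mem_singleton_iff]
    constructor
    · rintro (⟨hab, hP⟩ | hQ)
      · exact Or.inr ⟨hab, by tauto⟩
      · rcases hQ with ⟨h1, h2⟩ | ⟨h1, h2⟩ | ⟨h1, h2⟩ | ⟨h1, h2⟩ <;> subst h2 <;> tauto
    · rintro (rfl | ⟨hab, hbt⟩)
      · exact Or.inr (by tauto)
      · exact Or.inl ⟨hab, by tauto⟩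
  have hNt : G₂.neighborSet t = insert u (G.neighborSet t \ {i}) := by
    ext b
    simp only [SimpleGraph.mem_neighborSet, adj2, Set.mem_insert_iff, Set.mem_diff,
      Set.mem_singleton_iff]
    constructor
    · rintro (⟨hab, hP⟩ | hQ)
      · exact Or.inr ⟨hab, by tauto⟩
      · rcases hQ with ⟨h1, h2⟩ | ⟨h1, h2⟩ | ⟨h1, h2⟩ | ⟨h1, h2⟩ <;> subst h2 <;> tauto
    · rintro (rfl | ⟨hab, hbt⟩)
      · exact Or.inr (by tauto)
      · exact Or.inl ⟨hab, by tauto⟩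
  have hNs : G₂.neighborSet s = insert i (G.neighborSet s \ {u}) := by
    ext b
    simp only [SimpleGraph.mem_neighborSet, adj2, Set.mem_insert_iff, Set.mem_diff,
      Set.mem_singleton_iff]
    constructor
    · rintro (⟨hab, hP⟩ | hQ)
      · exact Or.inr ⟨hab, by tauto⟩
      · rcases hQ with ⟨h1, h2⟩ | ⟨h1, h2⟩ | ⟨h1, h2⟩ | ⟨h1, h2⟩ <;> subst h2 <;> tauto
    · rintro (rfl | ⟨hab, hbt⟩)
      · exact Or.inr (by tauto)
      · exact Or.inl ⟨hab, by tauto⟩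
  have hNu : G₂.neighborSet u = insert t (G.neighborSet u \ {s}) := by
    ext b
    simp only [SimpleGraph.mem_neighborSet, adj2, Set.mem_insert_iff, Set.mem_diff,
      Set.mem_singleton_iff]
    constructor
    · rintro (⟨hab, hP⟩ | hQ)
      · exact Or.inr ⟨hab, by tauto⟩
      · rcases hQ with ⟨h1, h2⟩ | ⟨h1, h2⟩ | ⟨h1, h2⟩ | ⟨h1, h2⟩ <;> subst h2 <;> tauto
    · rintro (rfl | ⟨hab, hbt⟩)
      · exact Or.inr (by tauto)
      · exact Or.inl ⟨hab, by tauto⟩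
  refine ⟨G₂, ?_, hNi⟩
  intro v
  by_cases hvi : v = i
  · subst hvi; rw [hNi]; exact ncard_swap hit his
  by_cases hvt : v = t
  · subst hvt; rw [hNt]; exact ncard_swap hit.symm htu
  by_cases hvs : v = s
  · subst hvs; rw [hNs]; exact ncard_swap hsu (fun h => his h.symm)
  by_cases hvu : v = u
  · subst hvu; rw [hNu]; exact ncard_swap hsu.symm (fun h => htu h.symm)
  have : G₂.neighborSet v = G.neighborSet v := by
    ext b
    simp only [SimpleGraph.mem_neighborSet, adj2]
    constructor
    · rintro (⟨hab, _⟩ | hQ)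
      · exact hab
      · tauto
    · intro hab; exact Or.inl ⟨hab, by tauto⟩
  rw [this]

lemma ncard_lt_seg {n m : ℕ} (h : m ≤ n) : {v : Fin n | (v : ℕ) < m}.ncard = m := by
  have he : {v : Fin n | (v : ℕ) < m} = (fun k : Fin m => Fin.castLE h k) '' Set.univ := by
    ext v
    simp only [Set.mem_setOf_eq, Set.image_univ, Set.mem_range]
    constructor
    · intro hv; exact ⟨⟨v, hv⟩, rfl⟩
    · rintro ⟨k, rfl⟩; exact k.2
  rw [he, Set.ncard_image_of_injective _ (Fin.castLE_injective h), Set.ncard_univ]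
  simp

lemma Scard {n : ℕ} (i : Fin n) {m : ℕ} (hm : m ≤ n - 1) :
    {v : Fin n | v ≠ i ∧ (if (v : ℕ) < (i : ℕ) then (v : ℕ) else (v : ℕ) - 1) < m}.ncard = m := by
  have hn : 0 < n := i.pos
  by_cases hmi : m ≤ (i : ℕ)
  · have he : {v : Fin n | v ≠ i ∧ (if (v : ℕ) < (i : ℕ) then (v : ℕ) else (v : ℕ) - 1) < m}
        = {v : Fin n | (v : ℕ) < m} := by
      ext v
      simp only [Set.mem_setOf_eq, ne_eq, Fin.ext_iff]
      by_cases h : (v : ℕ) < (i : ℕ) <;> simp [h] <;> omega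
    rw [he, ncard_lt_seg (by omega)]
  · have he : {v : Fin n | v ≠ i ∧ (if (v : ℕ) < (i : ℕ) then (v : ℕ) else (v : ℕ) - 1) < m}
        = {v : Fin n | (v : ℕ) < m + 1} \ {i} := by
      ext v
      simp only [Set.mem_setOf_eq, ne_eq, Fin.ext_iff, Set.mem_diff, Set.mem_singleton_iff]
      by_cases h : (v : ℕ) < (i : ℕ) <;> simp [h] <;> omega
    rw [he, Set.ncard_diff_singleton_of_mem (by simp only [Set.mem_setOf_eq]; omega),
      ncard_lt_seg (by omega)]
    omega

lemma ncard_diff_comm {n : ℕ} {S N : Set (Fin n)} (h : S.ncard = N.ncard) :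
    (S \ N).ncard = (N \ S).ncard := by
  have h1 : (S \ N).ncard + (S ∩ N).ncard = S.ncard := by
    rw [← Set.ncard_union_eq Set.disjoint_sdiff_inter (Set.toFinite _) (Set.toFinite _),
      Set.diff_union_inter]
  have h2 : (N \ S).ncard + (N ∩ S).ncard = N.ncard := by
    rw [← Set.ncard_union_eq Set.disjoint_sdiff_inter (Set.toFinite _) (Set.toFinite _),
      Set.diff_union_inter]
  rw [Set.inter_comm] at h2
  omega

lemma exists_u {n : ℕ} (G : SimpleGraph (Fin n)) {i s t : Fin n}
    (his : ¬ G.Adj i s) (hit : G.Adj i t) (hsi : s ≠ i)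
    (hdeg : (G.neighborSet t).ncard ≤ (G.neighborSet s).ncard) :
    ∃ u, G.Adj s u ∧ ¬ G.Adj t u ∧ u ≠ t ∧ u ≠ i := by
  by_contra hcon
  push_neg at hcon
  have hui : ∀ u, G.Adj s u → u ≠ i := by
    intro u hu h
    rw [h] at hu
    exact his hu.symm
  have hsub : G.neighborSet s \ {t} ⊆ (G.neighborSet t \ {i}) \ {s} := by
    intro u ⟨hu, hut⟩
    simp only [Set.mem_singleton_iff] at hut
    refine ⟨⟨?_, ?_⟩, ?_⟩
    · by_contra h
      exact hui u hu (hcon u hu h hut)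
    · simp only [Set.mem_singleton_iff]; exact hui u hu
    · simp only [Set.mem_singleton_iff]; exact fun h => G.loopless.irrefl s (h ▸ hu)
  have hc1 := Set.ncard_le_ncard hsub (Set.toFinite _)
  have hiNt : i ∈ G.neighborSet t := hit.symm
  have hNt1 : (G.neighborSet t \ {i}).ncard = (G.neighborSet t).ncard - 1 :=
    Set.ncard_diff_singleton_of_mem hiNt
  have hNtpos : 0 < (G.neighborSet t).ncard :=
    (Set.ncard_pos (Set.toFinite _)).mpr ⟨i, hiNt⟩
  by_cases hts : G.Adj s t
  · have h1 : (G.neighborSet s \ {t}).ncard = (G.neighborSet s).ncard - 1 :=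
      Set.ncard_diff_singleton_of_mem hts
    have hsNt : s ∈ G.neighborSet t \ {i} := ⟨hts.symm, by simpa using hsi⟩
    have h2 : ((G.neighborSet t \ {i}) \ {s}).ncard = (G.neighborSet t \ {i}).ncard - 1 :=
      Set.ncard_diff_singleton_of_mem hsNt
    have hpos2 : 0 < (G.neighborSet t \ {i}).ncard :=
      (Set.ncard_pos (Set.toFinite _)).mpr ⟨s, hsNt⟩
    have hspos : 0 < (G.neighborSet s).ncard :=
      (Set.ncard_pos (Set.toFinite _)).mpr ⟨t, hts⟩
    omega
  · have h1 : G.neighborSet s \ {t} = G.neighborSet s :=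
      Set.diff_singleton_eq_self (fun h => hts h)
    have h2 : ((G.neighborSet t \ {i}) \ {s}) = G.neighborSet t \ {i} :=
      Set.diff_singleton_eq_self (fun h => hts h.1.symm)
    rw [h1, h2, hNt1] at hc1
    omega

lemma rank_order {n : ℕ} {i v w : Fin n} (hv : v ≠ i) (hw : w ≠ i) {m : ℕ}
    (h1 : (if (v : ℕ) < (i : ℕ) then (v : ℕ) else (v : ℕ) - 1) < m)
    (h2 : ¬ (if (w : ℕ) < (i : ℕ) then (w : ℕ) else (w : ℕ) - 1) < m) :
    v ≤ w := by
  have hv' : (v : ℕ) ≠ (i : ℕ) := fun h => hv (Fin.ext h)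
  have hw' : (w : ℕ) ≠ (i : ℕ) := fun h => hw (Fin.ext h)
  rw [Fin.le_def]
  by_cases ha : (v : ℕ) < (i : ℕ) <;> by_cases hb : (w : ℕ) < (i : ℕ) <;>
    simp [ha, hb] at h1 h2 ⊢ <;> omega

lemma reach {n : ℕ} (α : Fin n → ℕ) (i : Fin n) (S : Set (Fin n))
    (hScard : S.ncard = α i) (hiS : i ∉ S)
    (horder : ∀ s ∈ S, ∀ t, t ∉ S → t ≠ i → α t ≤ α s) :
    ∀ m : ℕ, ∀ G : SimpleGraph (Fin n), (∀ v, (G.neighborSet v).ncard = α v) →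
      (S \ G.neighborSet i).ncard = m →
      ∃ G' : SimpleGraph (Fin n), (∀ v, (G'.neighborSet v).ncard = α v) ∧
        G'.neighborSet i = S := by
  intro m
  induction m with
  | zero =>
    intro G hG hm
    have hsub : S ⊆ G.neighborSet i := by
      rw [← Set.diff_eq_empty]
      exact (Set.ncard_eq_zero (Set.toFinite _)).mp hm
    have heq : S = G.neighborSet i :=
      Set.eq_of_subset_of_ncard_le hsub (by rw [hG i, hScard]) (Set.toFinite _)
    exact ⟨G, hG, heq.symm⟩
  | succ m ih =>
    intro G hG hm
    have hNcard : (G.neighborSet i).ncard = S.ncard := by rw [hG i, hScard]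
    obtain ⟨s, hs⟩ : (S \ G.neighborSet i).Nonempty := by
      rw [← Set.ncard_pos (Set.toFinite _), hm]; omega
    obtain ⟨t, ht⟩ : (G.neighborSet i \ S).Nonempty := by
      rw [← Set.ncard_pos (Set.toFinite _), ncard_diff_comm hNcard, hm]; omega
    have hit : G.Adj i t := ht.1
    have his : ¬ G.Adj i s := hs.2
    have hsi : s ≠ i := fun h => hiS (h ▸ hs.1)
    have hti : t ≠ i := fun h => G.loopless.irrefl i (h ▸ hit)
    have hst : s ≠ t := fun h => hs.2 (h ▸ ht.1)
    have hdeg : α t ≤ α s := horder s hs.1 t ht.2 hti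
    have hdeg' : (G.neighborSet t).ncard ≤ (G.neighborSet s).ncard := by
      rw [hG s, hG t]; exact hdeg
    obtain ⟨u, hsu, htu, hut, hui⟩ := exists_u G his hit hsi hdeg'
    obtain ⟨G₂, hG₂deg, hG₂N⟩ := swap_lemma G his hit hsu htu hsi.symm hst hui.symm hut.symm
    have hG₂ : ∀ v, (G₂.neighborSet v).ncard = α v := fun v => by rw [hG₂deg v, hG v]
    have hdiff : S \ G₂.neighborSet i = (S \ G.neighborSet i) \ {s} := by
      rw [hG₂N]
      ext x
      simp only [Set.mem_diff, Set.mem_insert_iff, Set.mem_singleton_iff]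
      constructor
      · rintro ⟨hxS, hx⟩
        push_neg at hx
        exact ⟨⟨hxS, fun hxN => ht.2 ((hx.2 hxN) ▸ hxS)⟩, hx.1⟩
      · rintro ⟨⟨hxS, hxN⟩, hxs⟩
        refine ⟨hxS, ?_⟩
        rintro (rfl | ⟨h1, _⟩)
        · exact hxs rfl
        · exact hxN h1
    have hmm : (S \ G₂.neighborSet i).ncard = m := by
      rw [hdiff, Set.ncard_diff_singleton_of_mem hs, hm]
      omega
    exact ih G₂ hG₂ hmm

/-- Kleitman–Wang: let `α` be a nonincreasing sequence with entries
at most `n-1` and let `i` be an index.  Let `α'` be the sequence obtained from `α`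
by subtracting `1` from the first `α i` entries other than the entry at index `i`
(a vertex `v ≠ i` is among these first `α i` entries exactly when its rank among
the indices different from `i`, namely `v` if `v < i` and `v - 1` otherwise, is
less than `α i`) and then setting the entry at index `i` to `0`.  Assuming the
decremented entries are positive, `α` is graphic if and only if `α'` is graphic. -/
theorem kleitman_wang {n : ℕ} (α : Fin n → ℕ) (hα : Antitone α)
    (hb : ∀ v, α v ≤ n - 1) (i : Fin n)
    (hpos : ∀ v : Fin n, v ≠ i →
      (if (v : ℕ) < (i : ℕ) then (v : ℕ) else (v : ℕ) - 1) < α i → 1 ≤ α v) :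
    Graphic α ↔
      Graphic (fun v : Fin n =>
        if v = i then 0
        else if (if (v : ℕ) < (i : ℕ) then (v : ℕ) else (v : ℕ) - 1) < α i then α v - 1
        else α v) := by
  set S : Set (Fin n) :=
    {v | v ≠ i ∧ (if (v : ℕ) < (i : ℕ) then (v : ℕ) else (v : ℕ) - 1) < α i} with hSdef
  have hScard : S.ncard = α i := Scard i (hb i)
  have hiS : i ∉ S := fun h => h.1 rfl
  have hmemS : ∀ v, v ∈ S ↔ v ≠ i ∧ (if (v : ℕ) < (i : ℕ) then (v : ℕ) else (v : ℕ) - 1) < α i :=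
    fun v => Iff.rfl
  have horder : ∀ s ∈ S, ∀ t, t ∉ S → t ≠ i → α t ≤ α s := by
    intro s hsS t htS hti
    exact hα (rank_order hsS.1 hti hsS.2 (fun h => htS ⟨hti, h⟩))
  constructor
  · rintro ⟨G, hG⟩
    obtain ⟨G', hG', hN⟩ := reach α i S hScard hiS horder _ G hG rfl
    set G₂ : SimpleGraph (Fin n) :=
      { Adj := fun a b => G'.Adj a b ∧ a ≠ i ∧ b ≠ i
        symm := by constructor; rintro a b ⟨h, h1, h2⟩; exact ⟨h.symm, h2, h1⟩
        loopless := by constructor; rintro a ⟨h, _, _⟩; exact G'.loopless.irrefl a h } with hG₂def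
    have adj2 : ∀ a b, G₂.Adj a b ↔ G'.Adj a b ∧ a ≠ i ∧ b ≠ i := by
      intro a b; rw [hG₂def]
    refine ⟨G₂, fun v => ?_⟩
    by_cases hvi : v = i
    · subst hvi
      have he : G₂.neighborSet v = ∅ := by
        ext b; simp only [SimpleGraph.mem_neighborSet, adj2]
        simp
      rw [he]
      simp
    · have he : G₂.neighborSet v = G'.neighborSet v \ {i} := by
        ext b
        simp only [SimpleGraph.mem_neighborSet, adj2, Set.mem_diff, Set.mem_singleton_iff]
        tauto
      rw [he]
      by_cases hvS : v ∈ S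
      · have hiN : i ∈ G'.neighborSet v := by
          have : v ∈ G'.neighborSet i := by rw [hN]; exact hvS
          exact SimpleGraph.mem_neighborSet _ _ _ |>.mpr
            (SimpleGraph.mem_neighborSet _ _ _ |>.mp this).symm
        rw [Set.ncard_diff_singleton_of_mem hiN, hG' v]
        simp only [if_neg hvi, if_pos hvS.2]
      · have hiN : i ∉ G'.neighborSet v := by
          intro h
          apply hvS
          rw [← hN]
          exact SimpleGraph.mem_neighborSet _ _ _ |>.mpr
            (SimpleGraph.mem_neighborSet _ _ _ |>.mp h).symm
        rw [Set.diff_singleton_eq_self hiN, hG' v]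
        have hcond : ¬ (if (v : ℕ) < (i : ℕ) then (v : ℕ) else (v : ℕ) - 1) < α i :=
          fun h => hvS ⟨hvi, h⟩
        simp only [if_neg hvi, if_neg hcond]
  · rintro ⟨G', hG'⟩
    have hNi : G'.neighborSet i = ∅ := by
      have h := hG' i
      simp only [if_pos rfl] at h
      exact (Set.ncard_eq_zero (Set.toFinite _)).mp h
    have hnoadj : ∀ b, ¬ G'.Adj i b := by
      intro b hb
      have : b ∈ G'.neighborSet i := hb
      rw [hNi] at this
      exact this
    set G₂ : SimpleGraph (Fin n) :=
      { Adj := fun a b => G'.Adj a b ∨ (a = i ∧ b ∈ S) ∨ (b = i ∧ a ∈ S)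
        symm := by
          constructor
          rintro a b (h | ⟨h1, h2⟩ | ⟨h1, h2⟩)
          · exact Or.inl h.symm
          · exact Or.inr (Or.inr ⟨h1, h2⟩)
          · exact Or.inr (Or.inl ⟨h1, h2⟩)
        loopless := by
          constructor
          rintro a (h | ⟨h1, h2⟩ | ⟨h1, h2⟩)
          · exact G'.loopless.irrefl a h
          · exact hiS (h1 ▸ h2)
          · exact hiS (h1 ▸ h2) } with hG₂def
    have adj2 : ∀ a b, G₂.Adj a b ↔ G'.Adj a b ∨ (a = i ∧ b ∈ S) ∨ (b = i ∧ a ∈ S) := by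
      intro a b; rw [hG₂def]
    refine ⟨G₂, fun v => ?_⟩
    by_cases hvi : v = i
    · subst hvi
      have he : G₂.neighborSet v = S := by
        ext b
        simp only [SimpleGraph.mem_neighborSet, adj2]
        constructor
        · rintro (h | ⟨_, h⟩ | ⟨h1, h2⟩)
          · exact absurd h (hnoadj b)
          · exact h
          · exact absurd h2 hiS
        · intro h; exact Or.inr (Or.inl ⟨by simp, h⟩)
      rw [he, hScard]
    · by_cases hvS : v ∈ S
      · have he : G₂.neighborSet v = insert i (G'.neighborSet v) := by
          ext b
          simp only [SimpleGraph.mem_neighborSet, adj2, Set.mem_insert_iff]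
          constructor
          · rintro (h | ⟨h1, _⟩ | ⟨h1, _⟩)
            · exact Or.inr h
            · exact absurd h1 hvi
            · exact Or.inl h1
          · rintro (rfl | h)
            · exact Or.inr (Or.inr ⟨rfl, hvS⟩)
            · exact Or.inl h
        have hiN : i ∉ G'.neighborSet v := by
          intro h
          exact hnoadj v ((SimpleGraph.mem_neighborSet _ _ _ |>.mp h).symm)
        rw [he, Set.ncard_insert_of_notMem hiN (Set.toFinite _), hG' v]
        simp only [if_neg hvi, if_pos hvS.2]
        have := hpos v hvi hvS.2
        omega
      · have he : G₂.neighborSet v = G'.neighborSet v := by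
          ext b
          simp only [SimpleGraph.mem_neighborSet, adj2]
          constructor
          · rintro (h | ⟨h1, _⟩ | ⟨_, h2⟩)
            · exact h
            · exact absurd h1 hvi
            · exact absurd h2 hvS
          · exact fun h => Or.inl h
        rw [he, hG' v]
        have hcond : ¬ (if (v : ℕ) < (i : ℕ) then (v : ℕ) else (v : ℕ) - 1) < α i :=
          fun h => hvS ⟨hvi, h⟩
        simp only [if_neg hvi, if_neg hcond]
end

section
/- Let α be a graphic degree sequence of length n and let i ≠ j be indices with α_i ≤ n−2 and α_j ≤ n−2. The edge {i,j} is forced for α if and only if the sequence ⊕_{i,j} α, obtained from α by adding 1 to the entries at indices i and j, is not graphic. -/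
/-! ### Auxiliary machinery: toggling a single edge of a simple graph -/

/-- The graph `G` with the edge `{p,q}` toggled. -/
def toggle {V : Type*} (G : SimpleGraph V) (p q : V) : SimpleGraph V where
  Adj a b := (s(a,b) = s(p,q) ∧ a ≠ b ∧ ¬ G.Adj a b) ∨ (s(a,b) ≠ s(p,q) ∧ G.Adj a b)
  symm := by
    refine ⟨?_⟩
    intro a b h
    rw [show s(b,a) = s(a,b) from Sym2.eq_swap]
    rcases h with ⟨h1, h2, h3⟩ | ⟨h1, h2⟩
    · exact Or.inl ⟨h1, h2.symm, fun hh => h3 hh.symm⟩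
    · exact Or.inr ⟨h1, h2.symm⟩
  loopless := by
    refine ⟨?_⟩
    intro a h
    rcases h with ⟨_, h2, _⟩ | ⟨_, h2⟩
    · exact h2 rfl
    · exact G.loopless.irrefl a h2

section ToggleLemmas

variable {V : Type*} {G : SimpleGraph V} {p q v a b : V}

lemma mem_nbr (h : G.Adj a b) : b ∈ G.neighborSet a := h

lemma adj_of_mem (h : b ∈ G.neighborSet a) : G.Adj a b := h

lemma toggle_adj :
    (toggle G p q).Adj a b ↔
      (s(a,b) = s(p,q) ∧ a ≠ b ∧ ¬ G.Adj a b) ∨ (s(a,b) ≠ s(p,q) ∧ G.Adj a b) :=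
  Iff.rfl

lemma toggle_comm : toggle G p q = toggle G q p := by
  ext a b
  rw [toggle_adj, toggle_adj, show s(p,q) = s(q,p) from Sym2.eq_swap]

lemma toggle_adj_of_ne (h : s(a,b) ≠ s(p,q)) : (toggle G p q).Adj a b ↔ G.Adj a b := by
  rw [toggle_adj]
  constructor
  · rintro (⟨h1, _⟩ | ⟨_, h2⟩)
    · exact absurd h1 h
    · exact h2
  · intro hh; exact Or.inr ⟨h, hh⟩

lemma toggle_adj_of_ne' (h1 : a ≠ p) (h2 : a ≠ q) : (toggle G p q).Adj a b ↔ G.Adj a b := by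
  refine toggle_adj_of_ne fun hc => ?_
  rcases Sym2.eq_iff.mp hc with ⟨rfl, rfl⟩ | ⟨rfl, rfl⟩
  · exact h1 rfl
  · exact h2 rfl

lemma toggle_adj_of_ne'' (h1 : b ≠ p) (h2 : b ≠ q) : (toggle G p q).Adj a b ↔ G.Adj a b := by
  refine toggle_adj_of_ne fun hc => ?_
  rcases Sym2.eq_iff.mp hc with ⟨rfl, rfl⟩ | ⟨rfl, rfl⟩
  · exact h2 rfl
  · exact h1 rfl

lemma toggle_adj_pair (h : p ≠ q) : (toggle G p q).Adj p q ↔ ¬ G.Adj p q := by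
  rw [toggle_adj]
  constructor
  · rintro (⟨_, _, h3⟩ | ⟨h1, _⟩)
    · exact h3
    · exact absurd rfl h1
  · intro hh; exact Or.inl ⟨rfl, h, hh⟩

lemma neighborSet_toggle_of_ne (hp : v ≠ p) (hq : v ≠ q) :
    (toggle G p q).neighborSet v = G.neighborSet v := by
  ext b
  simp only [SimpleGraph.mem_neighborSet]
  exact toggle_adj_of_ne' hp hq

lemma neighborSet_toggle_left_of_adj (hpq : p ≠ q) (h : G.Adj p q) :
    (toggle G p q).neighborSet p = G.neighborSet p \ {q} := by
  ext b
  simp only [SimpleGraph.mem_neighborSet, Set.mem_diff, Set.mem_singleton_iff]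
  by_cases hb : b = q
  · subst hb
    rw [toggle_adj_pair hpq]
    simp [h]
  · rw [toggle_adj_of_ne]
    · tauto
    · intro hc
      rcases Sym2.eq_iff.mp hc with ⟨-, rfl⟩ | ⟨hh, -⟩
      · exact hb rfl
      · exact hpq hh

lemma neighborSet_toggle_left_of_not_adj (hpq : p ≠ q) (h : ¬ G.Adj p q) :
    (toggle G p q).neighborSet p = insert q (G.neighborSet p) := by
  ext b
  simp only [SimpleGraph.mem_neighborSet, Set.mem_insert_iff]
  by_cases hb : b = q
  · subst hb
    rw [toggle_adj_pair hpq]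
    simp [h]
  · rw [toggle_adj_of_ne]
    · tauto
    · intro hc
      rcases Sym2.eq_iff.mp hc with ⟨-, rfl⟩ | ⟨hh, -⟩
      · exact hb rfl
      · exact hpq hh

lemma neighborSet_toggle_right_of_adj (hpq : p ≠ q) (h : G.Adj p q) :
    (toggle G p q).neighborSet q = G.neighborSet q \ {p} := by
  rw [toggle_comm]
  exact neighborSet_toggle_left_of_adj hpq.symm h.symm

lemma neighborSet_toggle_right_of_not_adj (hpq : p ≠ q) (h : ¬ G.Adj p q) :
    (toggle G p q).neighborSet q = insert p (G.neighborSet q) := by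
  rw [toggle_comm]
  exact neighborSet_toggle_left_of_not_adj hpq.symm (fun hh => h hh.symm)

end ToggleLemmas

/-- for a graphic nonincreasing degree sequence `α` (entries at most
`n-1`) and indices `i ≠ j` with `α i ≤ n-2` and `α j ≤ n-2`, the edge `{i,j}` is
forced for `α` if and only if `⊕_{i,j} α` is not graphic. -/
theorem forced_iff_increment_not_graphic {n : ℕ} (α : Fin n → ℕ)
    (hα : Antitone α) (hb : ∀ v, α v ≤ n - 1) (hg : Graphic α)
    (i j : Fin n) (hij : i ≠ j) (hi : α i ≤ n - 2) (hj : α j ≤ n - 2) :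
    ForcedEdge α i j ↔
      ¬ Graphic (fun v : Fin n => if v = i ∨ v = j then α v + 1 else α v) := by
  classical
  constructor
  · -- forced → the incremented sequence is not graphic
    intro hf hgr
    obtain ⟨G', hG'⟩ := hgr
    obtain ⟨G, hG⟩ := hg
    have hadjG : G.Adj i j := hf G hG
    have hi' : (G'.neighborSet i).ncard = α i + 1 := by simpa using hG' i
    have hj' : (G'.neighborSet j).ncard = α j + 1 := by simpa using hG' j
    have hother : ∀ v, v ≠ i → v ≠ j → (G'.neighborSet v).ncard = α v := by
      intro v h1 h2
      simpa [h1, h2] using hG' v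
    by_cases hij' : G'.Adj i j
    · -- delete the edge {i,j} from G'
      have hreal : IsRealization α (toggle G' i j) := by
        intro v
        by_cases hv1 : v = i
        · rw [hv1]
          rw [neighborSet_toggle_left_of_adj hij hij',
            Set.ncard_diff_singleton_of_mem (mem_nbr hij'), hi']
          omega
        · by_cases hv2 : v = j
          · rw [hv2]
            rw [neighborSet_toggle_right_of_adj hij hij',
              Set.ncard_diff_singleton_of_mem (mem_nbr hij'.symm), hj']
            omega
          · rw [neighborSet_toggle_of_ne hv1 hv2, hother v hv1 hv2]
      have := hf _ hreal
      rw [toggle_adj_pair hij] at this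
      exact this hij'
    · by_cases h2a : ∃ u, G'.Adj i u ∧ ∃ x, G'.Adj j x ∧ u ≠ x ∧ ¬ G'.Adj u x
      · -- a 2-switch produces a realization of α missing {i,j}
        obtain ⟨u, hiu, x, hjx, hux, hnadjux⟩ := h2a
        have hui : u ≠ i := hiu.ne'
        have huj : u ≠ j := fun h => hij' (h ▸ hiu)
        have hxj : x ≠ j := hjx.ne'
        have hxi : x ≠ i := fun h => hij' (h ▸ hjx : G'.Adj j i).symm
        set H := toggle (toggle (toggle G' i u) j x) u x with hH
        have a1 : (toggle G' i u).Adj j x ↔ G'.Adj j x :=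
          toggle_adj_of_ne' hij.symm huj.symm
        have a2 : (toggle (toggle G' i u) j x).Adj u x ↔ G'.Adj u x := by
          rw [toggle_adj_of_ne' huj hux]
          refine toggle_adj_of_ne fun hc => ?_
          rcases Sym2.eq_iff.mp hc with ⟨h1, -⟩ | ⟨-, h2⟩
          · exact hui h1
          · exact hxi h2
        have hreal : IsRealization α H := by
          intro v
          by_cases hv1 : v = i
          · rw [hv1]
            rw [hH, neighborSet_toggle_of_ne hui.symm hxi.symm,
              neighborSet_toggle_of_ne hij hxi.symm,
              neighborSet_toggle_left_of_adj hiu.ne hiu,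
              Set.ncard_diff_singleton_of_mem (mem_nbr hiu), hi']
            omega
          · by_cases hv2 : v = j
            · rw [hv2]
              rw [hH, neighborSet_toggle_of_ne huj.symm hxj.symm,
                neighborSet_toggle_left_of_adj hjx.ne (a1.mpr hjx),
                neighborSet_toggle_of_ne hij.symm huj.symm,
                Set.ncard_diff_singleton_of_mem (mem_nbr hjx), hj']
              omega
            · by_cases hv3 : v = u
              · rw [hv3]
                have hpos : 0 < α u := by
                  rw [← hother u hui huj]
                  exact (Set.ncard_pos (Set.toFinite _)).mpr ⟨i, mem_nbr hiu.symm⟩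
                have hxnot : x ∉ G'.neighborSet u \ {i} := fun hc =>
                  hnadjux (adj_of_mem hc.1)
                rw [hH,
                  neighborSet_toggle_left_of_not_adj hux (fun hc => hnadjux (a2.mp hc)),
                  neighborSet_toggle_of_ne huj hux,
                  neighborSet_toggle_right_of_adj hiu.ne hiu,
                  Set.ncard_insert_of_notMem hxnot,
                  Set.ncard_diff_singleton_of_mem (mem_nbr hiu.symm),
                  hother u hui huj]
                omega
              · by_cases hv4 : v = x
                · rw [hv4]
                  have hpos : 0 < α x := by
                    rw [← hother x hxi hxj]
                    exact (Set.ncard_pos (Set.toFinite _)).mpr ⟨j, mem_nbr hjx.symm⟩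
                  have hunot : u ∉ G'.neighborSet x \ {j} := fun hc =>
                    hnadjux (adj_of_mem hc.1).symm
                  rw [hH,
                    neighborSet_toggle_right_of_not_adj hux
                      (fun hc => hnadjux (a2.mp hc)),
                    neighborSet_toggle_right_of_adj hjx.ne (a1.mpr hjx),
                    neighborSet_toggle_of_ne hxi hux.symm,
                    Set.ncard_insert_of_notMem hunot,
                    Set.ncard_diff_singleton_of_mem (mem_nbr hjx.symm),
                    hother x hxi hxj]
                  omega
                · rw [hH, neighborSet_toggle_of_ne hv3 hv4,
                    neighborSet_toggle_of_ne hv2 hv4,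
                    neighborSet_toggle_of_ne hv1 hv3,
                    hother v hv1 hv2]
        have hnadjH : ¬ H.Adj i j := by
          rw [hH, toggle_adj_of_ne' hui.symm hxi.symm,
            toggle_adj_of_ne' hij hxi.symm,
            toggle_adj_of_ne'' hij.symm huj.symm]
          exact hij'
        exact hnadjH (hf H hreal)
      · push_neg at h2a
        obtain ⟨u, hu', hu⟩ : ∃ u, G'.Adj i u ∧ ¬ G.Adj i u := by
          by_contra hc
          push_neg at hc
          have hsub : G'.neighborSet i ⊆ G.neighborSet i := fun b hb =>
            mem_nbr (hc b (adj_of_mem hb))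
          have hcard := Set.ncard_le_ncard hsub (Set.toFinite _)
          rw [hi', hG i] at hcard
          omega
        have hui : u ≠ i := hu'.ne'
        have huj : u ≠ j := fun h => hij' (h ▸ hu')
        by_cases hw : ∃ w, G.Adj u w ∧ w ≠ j ∧ ¬ G.Adj j w
        · -- a 2-switch on G produces a realization of α missing {i,j}
          obtain ⟨w, huw, hwj, hnjw⟩ := hw
          have hwu : w ≠ u := huw.ne'
          have hwi : w ≠ i := fun h => hu (SimpleGraph.Adj.symm (h ▸ huw))
          set H := toggle (toggle (toggle (toggle G i j) i u) j w) u w with hH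
          have b1 : (toggle G i j).Adj i u ↔ G.Adj i u := toggle_adj_of_ne'' hui huj
          have b2 : (toggle (toggle G i j) i u).Adj j w ↔ G.Adj j w := by
            rw [toggle_adj_of_ne' hij.symm huj.symm]
            exact toggle_adj_of_ne'' hwi hwj
          have b3 : (toggle (toggle (toggle G i j) i u) j w).Adj u w ↔ G.Adj u w := by
            rw [toggle_adj_of_ne' huj hwu.symm, toggle_adj_of_ne'' hwi hwu]
            exact toggle_adj_of_ne' hui huj
          have hreal : IsRealization α H := by
            intro v
            by_cases hv1 : v = i
            · rw [hv1]
              have hpos : 0 < α i := by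
                rw [← hG i]
                exact (Set.ncard_pos (Set.toFinite _)).mpr ⟨j, mem_nbr hadjG⟩
              have hnot : u ∉ G.neighborSet i \ {j} := fun hc => hu (adj_of_mem hc.1)
              rw [hH, neighborSet_toggle_of_ne hui.symm hwi.symm,
                neighborSet_toggle_of_ne hij hwi.symm,
                neighborSet_toggle_left_of_not_adj hui.symm (fun hc => hu (b1.mp hc)),
                neighborSet_toggle_left_of_adj hij hadjG,
                Set.ncard_insert_of_notMem hnot,
                Set.ncard_diff_singleton_of_mem (mem_nbr hadjG), hG i]
              omega
            · by_cases hv2 : v = j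
              · rw [hv2]
                have hpos : 0 < α j := by
                  rw [← hG j]
                  exact (Set.ncard_pos (Set.toFinite _)).mpr ⟨i, mem_nbr hadjG.symm⟩
                have hnot : w ∉ G.neighborSet j \ {i} := fun hc =>
                  hnjw (adj_of_mem hc.1)
                rw [hH, neighborSet_toggle_of_ne huj.symm hwj.symm,
                  neighborSet_toggle_left_of_not_adj hwj.symm
                    (fun hc => hnjw (b2.mp hc)),
                  neighborSet_toggle_of_ne hij.symm huj.symm,
                  neighborSet_toggle_right_of_adj hij hadjG,
                  Set.ncard_insert_of_notMem hnot,
                  Set.ncard_diff_singleton_of_mem (mem_nbr hadjG.symm), hG j]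
                omega
              · by_cases hv3 : v = u
                · rw [hv3]
                  have hmemw : w ∈ insert i (G.neighborSet u) :=
                    Set.mem_insert_iff.mpr (Or.inr (mem_nbr huw))
                  have hnoti : i ∉ G.neighborSet u := fun hc =>
                    hu (adj_of_mem hc).symm
                  rw [hH, neighborSet_toggle_left_of_adj hwu.symm (b3.mpr huw),
                    neighborSet_toggle_of_ne huj hwu.symm,
                    neighborSet_toggle_right_of_not_adj hui.symm
                      (fun hc => hu (b1.mp hc)),
                    neighborSet_toggle_of_ne hui huj,
                    Set.ncard_diff_singleton_of_mem hmemw,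
                    Set.ncard_insert_of_notMem hnoti, hG u]
                  omega
                · by_cases hv4 : v = w
                  · rw [hv4]
                    have hmemu : u ∈ insert j (G.neighborSet w) :=
                      Set.mem_insert_iff.mpr (Or.inr (mem_nbr huw.symm))
                    have hnotj : j ∉ G.neighborSet w := fun hc =>
                      hnjw (adj_of_mem hc).symm
                    rw [hH, neighborSet_toggle_right_of_adj hwu.symm (b3.mpr huw),
                      neighborSet_toggle_right_of_not_adj hwj.symm
                        (fun hc => hnjw (b2.mp hc)),
                      neighborSet_toggle_of_ne hwi hwu,
                      neighborSet_toggle_of_ne hwi hwj,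
                      Set.ncard_diff_singleton_of_mem hmemu,
                      Set.ncard_insert_of_notMem hnotj, hG w]
                    omega
                  · rw [hH, neighborSet_toggle_of_ne hv3 hv4,
                      neighborSet_toggle_of_ne hv2 hv4,
                      neighborSet_toggle_of_ne hv1 hv3,
                      neighborSet_toggle_of_ne hv1 hv2, hG v]
          have hnadjH : ¬ H.Adj i j := by
            rw [hH, toggle_adj_of_ne' hui.symm hwi.symm,
              toggle_adj_of_ne' hij hwi.symm,
              toggle_adj_of_ne'' hij.symm huj.symm,
              toggle_adj_pair hij]
            exact fun hc => hc hadjG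
          exact hnadjH (hf H hreal)
        · -- impossible: counting contradiction
          push_neg at hw
          have hle1 : α u ≤ α j := by
            have hsub : G.neighborSet u ⊆ insert j (G.neighborSet j) \ {i} := by
              intro b hbmem
              have hadjub : G.Adj u b := adj_of_mem hbmem
              refine Set.mem_diff_of_mem ?_ ?_
              · by_cases hbj : b = j
                · exact Set.mem_insert_iff.mpr (Or.inl hbj)
                · exact Set.mem_insert_iff.mpr (Or.inr (mem_nbr (hw b hadjub hbj)))
              · intro hbi
                rw [Set.mem_singleton_iff] at hbi
                subst hbi
                exact hu hadjub.symm
            have h1 := Set.ncard_le_ncard hsub (Set.toFinite _)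
            have h2 : ((insert j (G.neighborSet j)) \ {i}).ncard = α j := by
              rw [Set.ncard_diff_singleton_of_mem
                  (Set.mem_insert_iff.mpr (Or.inr (mem_nbr hadjG.symm))),
                Set.ncard_insert_of_notMem (fun hc => G.loopless.irrefl j (adj_of_mem hc)),
                hG j]
              omega
            rw [hG u, h2] at h1
            exact h1
          have hge : α j + 2 ≤ α u := by
            have hiNj' : i ∉ G'.neighborSet j := fun hc => hij' (adj_of_mem hc).symm
            have hsub2 : insert i (G'.neighborSet j \ {u}) ⊆ G'.neighborSet u := by
              intro b hb
              rcases Set.mem_insert_iff.mp hb with rfl | hb2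
              · exact mem_nbr hu'.symm
              · refine mem_nbr (h2a u hu' b (adj_of_mem hb2.1) ?_)
                intro h
                exact hb2.2 (Set.mem_singleton_iff.mpr h.symm)
            have e2 : i ∉ G'.neighborSet j \ {u} := fun hc => hiNj' hc.1
            by_cases hmem : u ∈ G'.neighborSet j
            · have hsub3 : insert j (insert i (G'.neighborSet j \ {u})) ⊆
                  G'.neighborSet u := by
                intro b hb
                rcases Set.mem_insert_iff.mp hb with rfl | hb2
                · exact mem_nbr (adj_of_mem hmem).symm
                · exact hsub2 hb2
              have h1 := Set.ncard_le_ncard hsub3 (Set.toFinite _)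
              have e1 : (G'.neighborSet j \ {u}).ncard = α j := by
                rw [Set.ncard_diff_singleton_of_mem hmem, hj']
                omega
              have e3 : j ∉ insert i (G'.neighborSet j \ {u}) := by
                intro hc
                rcases Set.mem_insert_iff.mp hc with h | h
                · exact hij h.symm
                · exact G'.loopless.irrefl j (adj_of_mem h.1)
              rw [Set.ncard_insert_of_notMem e3, Set.ncard_insert_of_notMem e2, e1,
                hother u hui huj] at h1
              omega
            · have hdiff : G'.neighborSet j \ {u} = G'.neighborSet j :=
                Set.diff_singleton_eq_self hmem
              have h1 := Set.ncard_le_ncard hsub2 (Set.toFinite _)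
              rw [Set.ncard_insert_of_notMem e2, hdiff, hj',
                hother u hui huj] at h1
              omega
          omega
  · -- if the incremented sequence is not graphic, the edge is forced
    intro hng G hGr
    by_contra hnadj
    apply hng
    refine ⟨toggle G i j, fun v => ?_⟩
    by_cases hv1 : v = i
    · rw [hv1]
      rw [neighborSet_toggle_left_of_not_adj hij hnadj,
        Set.ncard_insert_of_notMem (fun hc => hnadj (adj_of_mem hc)), hGr i]
      simp
    · by_cases hv2 : v = j
      · rw [hv2]
        rw [neighborSet_toggle_right_of_not_adj hij hnadj,
          Set.ncard_insert_of_notMem (fun hc => hnadj (adj_of_mem hc).symm), hGr j]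
        simp
      · rw [neighborSet_toggle_of_ne hv1 hv2, hGr v]
        simp [hv1, hv2]
end

section
/- Let α be a graphic degree sequence of length n and let i ≠ j be indices with α_i ≥ 1 and α_j ≥ 1. The edge {i,j} is forbidden for α if and only if the sequence ⊖_{i,j} α, obtained from α by subtracting 1 from the entries at indices i and j, is not graphic. -/
namespace ForbiddenAux

/-- Add a single edge to a graph. -/
def addE {n : ℕ} (K : SimpleGraph (Fin n)) (a b : Fin n) : SimpleGraph (Fin n) :=
  K ⊔ SimpleGraph.fromEdgeSet {s(a, b)}

/-- Delete a single edge from a graph. -/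
def delE {n : ℕ} (K : SimpleGraph (Fin n)) (a b : Fin n) : SimpleGraph (Fin n) :=
  K.deleteEdges {s(a, b)}

lemma addE_adj {n : ℕ} (K : SimpleGraph (Fin n)) (a b x y : Fin n) :
    (addE K a b).Adj x y ↔ K.Adj x y ∨ (s(x, y) = s(a, b) ∧ x ≠ y) := by
  simp [addE, SimpleGraph.fromEdgeSet_adj]

lemma delE_adj {n : ℕ} (K : SimpleGraph (Fin n)) (a b x y : Fin n) :
    (delE K a b).Adj x y ↔ K.Adj x y ∧ s(x, y) ≠ s(a, b) := by
  simp [delE, SimpleGraph.deleteEdges_adj]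

lemma addE_nbr_left {n : ℕ} (K : SimpleGraph (Fin n)) {a b : Fin n} (hab : a ≠ b) :
    (addE K a b).neighborSet a = insert b (K.neighborSet a) := by
  ext x
  rw [SimpleGraph.mem_neighborSet, addE_adj, Set.mem_insert_iff, SimpleGraph.mem_neighborSet]
  constructor
  · rintro (hx | ⟨he, hne⟩)
    · exact Or.inr hx
    · exact Or.inl (Sym2.congr_right.mp he)
  · rintro (rfl | hx)
    · exact Or.inr ⟨rfl, hab⟩
    · exact Or.inl hx

lemma addE_nbr_off {n : ℕ} (K : SimpleGraph (Fin n)) {a b v : Fin n}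
    (hva : v ≠ a) (hvb : v ≠ b) :
    (addE K a b).neighborSet v = K.neighborSet v := by
  ext x
  rw [SimpleGraph.mem_neighborSet, addE_adj, SimpleGraph.mem_neighborSet]
  constructor
  · rintro (hx | ⟨he, hne⟩)
    · exact hx
    · rcases Sym2.eq_iff.mp he with ⟨rfl, rfl⟩ | ⟨rfl, rfl⟩
      · exact absurd rfl hva
      · exact absurd rfl hvb
  · exact fun hx => Or.inl hx

lemma addE_comm {n : ℕ} (K : SimpleGraph (Fin n)) (a b : Fin n) :
    addE K a b = addE K b a := by
  unfold addE
  rw [Sym2.eq_swap]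

lemma ncard_addE {n : ℕ} (K : SimpleGraph (Fin n)) {a b : Fin n} (hab : a ≠ b)
    (h : ¬ K.Adj a b) (v : Fin n) :
    ((addE K a b).neighborSet v).ncard
      = (K.neighborSet v).ncard + (if v = a ∨ v = b then 1 else 0) := by
  by_cases hva : v = a
  · subst hva
    rw [addE_nbr_left K hab, Set.ncard_insert_of_notMem (by simpa using h) (Set.toFinite _),
      if_pos (Or.inl rfl)]
  · by_cases hvb : v = b
    · subst hvb
      rw [addE_comm, addE_nbr_left K (Ne.symm hab), if_pos (Or.inr rfl)]
      exact Set.ncard_insert_of_notMem (fun hx => h (SimpleGraph.Adj.symm hx)) (Set.toFinite _)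
    · rw [addE_nbr_off K hva hvb, if_neg (by tauto), Nat.add_zero]

lemma delE_nbr_left {n : ℕ} (K : SimpleGraph (Fin n)) {a b : Fin n} (hab : a ≠ b) :
    (delE K a b).neighborSet a = K.neighborSet a \ {b} := by
  ext x
  rw [SimpleGraph.mem_neighborSet, delE_adj, Set.mem_diff, Set.mem_singleton_iff,
    SimpleGraph.mem_neighborSet]
  constructor
  · rintro ⟨hx, hne⟩
    exact ⟨hx, fun hxb => hne (by rw [hxb])⟩
  · rintro ⟨hx, hxb⟩
    refine ⟨hx, fun he => ?_⟩
    rcases Sym2.eq_iff.mp he with ⟨-, rfl⟩ | ⟨rfl, rfl⟩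
    · exact hxb rfl
    · exact hab rfl

lemma delE_nbr_off {n : ℕ} (K : SimpleGraph (Fin n)) {a b v : Fin n}
    (hva : v ≠ a) (hvb : v ≠ b) :
    (delE K a b).neighborSet v = K.neighborSet v := by
  ext x
  rw [SimpleGraph.mem_neighborSet, delE_adj, SimpleGraph.mem_neighborSet]
  constructor
  · exact fun hx => hx.1
  · intro hx
    refine ⟨hx, fun he => ?_⟩
    rcases Sym2.eq_iff.mp he with ⟨rfl, rfl⟩ | ⟨rfl, rfl⟩
    · exact hva rfl
    · exact hvb rfl

lemma delE_comm {n : ℕ} (K : SimpleGraph (Fin n)) (a b : Fin n) :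
    delE K a b = delE K b a := by
  unfold delE
  rw [Sym2.eq_swap]

lemma ncard_delE {n : ℕ} (K : SimpleGraph (Fin n)) {a b : Fin n} (h : K.Adj a b) (v : Fin n) :
    ((delE K a b).neighborSet v).ncard + (if v = a ∨ v = b then 1 else 0)
      = (K.neighborSet v).ncard := by
  have hab : a ≠ b := K.ne_of_adj h
  by_cases hva : v = a
  · subst hva
    rw [delE_nbr_left K hab, if_pos (Or.inl rfl)]
    exact Set.ncard_diff_singleton_add_one (by simpa using h) (Set.toFinite _)
  · by_cases hvb : v = b
    · subst hvb
      rw [delE_comm, delE_nbr_left K (Ne.symm hab), if_pos (Or.inr rfl)]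
      exact Set.ncard_diff_singleton_add_one (by simpa using h.symm) (Set.toFinite _)
    · rw [delE_nbr_off K hva hvb, if_neg (by tauto), Nat.add_zero]

/-- The swap-vertex lemma: if `p ~ c`, `p ≁ b` and `deg c ≤ deg b`, then there is `z`
adjacent to `b` but not to `c`, distinct from all of `p, b, c`. -/
lemma exists_swap_vertex {n : ℕ} (K : SimpleGraph (Fin n)) {p b c : Fin n}
    (hpb : ¬ K.Adj p b) (hpc : K.Adj p c) (hbp : b ≠ p)
    (hd : (K.neighborSet c).ncard ≤ (K.neighborSet b).ncard) :
    ∃ z, z ≠ p ∧ z ≠ b ∧ z ≠ c ∧ K.Adj b z ∧ ¬ K.Adj c z := by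
  have hbc : b ≠ c := by rintro rfl; exact hpb hpc
  by_contra hcon
  push_neg at hcon
  have h' : ∀ x, K.Adj b x → x ≠ c → K.Adj c x := by
    intro x hbx hxc
    by_contra hcx
    have hxp : x ≠ p := by rintro rfl; exact hpb hbx.symm
    exact hcx (hcon x hxp (fun hxb => K.irrefl (hxb ▸ hbx)) hxc hbx)
  have hsub : K.neighborSet b \ {c} ⊆ (K.neighborSet c \ {p}) \ {b} := by
    rintro x ⟨hxb, hxc⟩
    simp only [Set.mem_singleton_iff] at hxc
    have hadj : K.Adj b x := hxb
    refine ⟨⟨h' x hadj hxc, ?_⟩, ?_⟩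
    · simp only [Set.mem_singleton_iff]
      rintro rfl; exact hpb hadj.symm
    · simp only [Set.mem_singleton_iff]
      rintro rfl; exact K.irrefl hadj
  have hple : (K.neighborSet c \ {p}).ncard + 1 = (K.neighborSet c).ncard :=
    Set.ncard_diff_singleton_add_one (by simpa using hpc.symm) (Set.toFinite _)
  have hmono := Set.ncard_le_ncard hsub (Set.toFinite _)
  by_cases hKbc : K.Adj b c
  · have f1 : (K.neighborSet b \ {c}).ncard + 1 = (K.neighborSet b).ncard :=
      Set.ncard_diff_singleton_add_one (by simpa using hKbc) (Set.toFinite _)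
    have hbmem : b ∈ K.neighborSet c \ {p} := by
      refine ⟨by simpa using hKbc.symm, ?_⟩
      simp only [Set.mem_singleton_iff]; exact hbp
    have f3 : ((K.neighborSet c \ {p}) \ {b}).ncard + 1 = (K.neighborSet c \ {p}).ncard :=
      Set.ncard_diff_singleton_add_one hbmem (Set.toFinite _)
    omega
  · have f1 : K.neighborSet b \ {c} = K.neighborSet b :=
      Set.diff_singleton_eq_self (by simpa using (fun h => hKbc h : c ∈ K.neighborSet b → False))
    rw [f1] at hmono
    have hstep : ((K.neighborSet c \ {p}) \ {b}).ncard ≤ (K.neighborSet c \ {p}).ncard :=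
      Set.ncard_le_ncard Set.diff_subset (Set.toFinite _)
    omega

/-- Key lemma: if `α` and its decrement at `i, j` are both graphic, then `α` has a
realization containing the edge `{i, j}`. -/
lemma key {n : ℕ} (α : Fin n → ℕ) (i j : Fin n) (hij : i ≠ j)
    (hi : 1 ≤ α i) (hj : 1 ≤ α j)
    (G H : SimpleGraph (Fin n)) (hG : IsRealization α G)
    (hH : IsRealization (fun v : Fin n => if v = i ∨ v = j then α v - 1 else α v) H) :
    ∃ K, IsRealization α K ∧ K.Adj i j := by
  by_cases hGij : G.Adj i j
  · exact ⟨G, hG, hGij⟩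
  by_cases hHij : H.Adj i j
  · -- the interesting case
    by_cases hc : ∃ c, G.Adj i c ∧ α c ≤ α j
    · -- 2-switch on G creating the edge ij
      obtain ⟨c, hic, hcj⟩ := hc
      have hci : c ≠ i := fun h => G.irrefl (h ▸ hic)
      have hcj' : c ≠ j := fun h => hGij (h ▸ hic)
      have hd : (G.neighborSet c).ncard ≤ (G.neighborSet j).ncard := by
        rw [hG c, hG j]; exact hcj
      obtain ⟨z, hzi, hzj, hzc, hjz, hcz⟩ :=
        exists_swap_vertex G (p := i) (b := j) (c := c) hGij hic (Ne.symm hij) hd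
      -- K = G - ic - jz + ij + cz
      have h2 : (delE G i c).Adj j z := by
        rw [delE_adj]
        refine ⟨hjz, fun he => ?_⟩
        rcases Sym2.eq_iff.mp he with ⟨rfl, rfl⟩ | ⟨rfl, rfl⟩
        · exact hij rfl
        · exact hcj' rfl
      have h3 : ¬ (delE (delE G i c) j z).Adj i j := by
        rw [delE_adj, delE_adj]
        rintro ⟨⟨h, -⟩, -⟩
        exact hGij h
      have h4 : ¬ (addE (delE (delE G i c) j z) i j).Adj c z := by
        rw [addE_adj, delE_adj, delE_adj, Sym2.eq_iff]
        rintro (⟨⟨h, -⟩, -⟩ | ⟨(⟨rfl, rfl⟩ | ⟨rfl, rfl⟩), -⟩)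
        · exact hcz h
        · exact hci rfl
        · exact hcj' rfl
      refine ⟨addE (addE (delE (delE G i c) j z) i j) c z, ?_, ?_⟩
      · intro v
        have e1 := ncard_delE G hic v
        have e2 := ncard_delE (delE G i c) h2 v
        have e3 := ncard_addE (delE (delE G i c) j z) hij h3 v
        have e4 := ncard_addE (addE (delE (delE G i c) j z) i j) (Ne.symm hzc) h4 v
        rw [hG v] at e1
        by_cases hvi : v = i <;> by_cases hvj : v = j <;> by_cases hvc : v = c <;>
          by_cases hvz : v = z <;>
          simp_all <;> omega
      · rw [addE_adj, addE_adj]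
        exact Or.inl (Or.inr ⟨rfl, hij⟩)
    · push_neg at hc
      by_cases hb : ∃ b, b ≠ i ∧ ¬ H.Adj i b ∧
          (H.neighborSet j).ncard ≤ (H.neighborSet b).ncard
      · -- move on H: K = H - bz + ib + jz, keeps ij
        obtain ⟨b, hbi, hbH, hdb⟩ := hb
        have hbj : b ≠ j := fun h => hbH (h ▸ hHij)
        obtain ⟨z, hzi, hzb, hzj, hbz, hjz⟩ :=
          exists_swap_vertex H (p := i) (b := b) (c := j) hbH hHij hbi hdb
        have h2 : ¬ (delE H b z).Adj i b := by
          rw [delE_adj]; rintro ⟨h, -⟩; exact hbH h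
        have h3 : ¬ (addE (delE H b z) i b).Adj j z := by
          rw [addE_adj, delE_adj, Sym2.eq_iff]
          rintro (⟨h, -⟩ | ⟨(⟨rfl, rfl⟩ | ⟨rfl, rfl⟩), -⟩)
          · exact hjz h
          · exact hij rfl
          · exact hzi rfl
        refine ⟨addE (addE (delE H b z) i b) j z, ?_, ?_⟩
        · intro v
          have e1 := ncard_delE H hbz v
          have e2 := ncard_addE (delE H b z) (Ne.symm hbi) h2 v
          have e3 := ncard_addE (addE (delE H b z) i b) (Ne.symm hzj) h3 v
          have e0 := hH v
          by_cases hvi : v = i <;> by_cases hvj : v = j <;> by_cases hvb : v = b <;>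
            by_cases hvz : v = z <;>
            simp_all
        · rw [addE_adj, addE_adj, delE_adj]
          refine Or.inl (Or.inl ⟨hHij, fun he => ?_⟩)
          rcases Sym2.eq_iff.mp he with ⟨rfl, rfl⟩ | ⟨rfl, rfl⟩
          · exact hbi rfl
          · exact hzi rfl
      · -- contradiction by counting
        exfalso
        push_neg at hb
        have hsub : G.neighborSet i ⊆ H.neighborSet i \ {j} := by
          intro c hcmem
          have hic : G.Adj i c := hcmem
          have hlt : α j < α c := hc c hic
          have hci : c ≠ i := fun h => G.irrefl (h ▸ hic)
          have hcj' : c ≠ j := fun h => by rw [h] at hlt; omega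
          have hcH : H.Adj i c := by
            by_contra hnot
            have := hb c hci hnot
            rw [hH c, hH j] at this
            simp [hci, hcj'] at this
            omega
          exact ⟨hcH, by simpa using hcj'⟩
        have hHi : (H.neighborSet i).ncard = α i - 1 := by
          have := hH i; simpa using this
        have hjmem : j ∈ H.neighborSet i := hHij
        have hne : 0 < (H.neighborSet i).ncard :=
          (Set.ncard_pos (Set.toFinite _)).mpr ⟨j, hjmem⟩
        have hdiff : (H.neighborSet i \ {j}).ncard + 1 = (H.neighborSet i).ncard :=
          Set.ncard_diff_singleton_add_one hjmem (Set.toFinite _)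
        have hmono := Set.ncard_le_ncard hsub (Set.toFinite _)
        rw [hG i] at hmono
        omega
  · -- just add the edge ij to H
    have h0 : ¬ H.Adj i j := hHij
    refine ⟨addE H i j, ?_, ?_⟩
    · intro v
      have e1 := ncard_addE H hij h0 v
      have e0 := hH v
      by_cases hvi : v = i <;> by_cases hvj : v = j <;> simp_all
    · rw [addE_adj]
      exact Or.inr ⟨rfl, hij⟩

end ForbiddenAux

/-- for a graphic nonincreasing degree sequence `α` (entries at most
`n-1`) and indices `i ≠ j` with `α i ≥ 1` and `α j ≥ 1`, the edge `{i,j}` is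
forbidden for `α` if and only if `⊖_{i,j} α` is not graphic. -/
theorem forbidden_iff_decrement_not_graphic {n : ℕ} (α : Fin n → ℕ)
    (hα : Antitone α) (hb : ∀ v, α v ≤ n - 1) (hg : Graphic α)
    (i j : Fin n) (hij : i ≠ j) (hi : 1 ≤ α i) (hj : 1 ≤ α j) :
    ForbiddenEdge α i j ↔
      ¬ Graphic (fun v : Fin n => if v = i ∨ v = j then α v - 1 else α v) := by
  constructor
  · intro hforb hgr
    obtain ⟨H, hH⟩ := hgr
    obtain ⟨G, hG⟩ := hg
    obtain ⟨K, hK, hadj⟩ := ForbiddenAux.key α i j hij hi hj G H hG hH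
    exact hforb K hK hadj
  · intro hnot G hG hadj
    apply hnot
    refine ⟨ForbiddenAux.delE G i j, ?_⟩
    intro v
    show _ = if v = i ∨ v = j then α v - 1 else α v
    have e1 := ForbiddenAux.ncard_delE G hadj v
    rw [hG v] at e1
    by_cases hv : v = i ∨ v = j
    · rw [if_pos hv] at e1
      rw [if_pos hv]
      rcases hv with rfl | rfl <;> omega
    · rw [if_neg hv]
      rw [if_neg hv] at e1
      omega
end

section
/- Let α be a graphic degree sequence of length n and let i ≠ j be indices such that the edge {i,j} is forced for α. Then for every realization G of α and every vertex subset S of {1,…,n} with {i,j} ⊆ S, the edge {i,j} is forced for the degree sequence of the induced subgraph G[S]: that is, every simple graph on vertex set S in which each vertex v has the same degree as it has in G[S] contains the edge {i,j}. -/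
/-- if the edge `{i,j}` is forced for the graphic nonincreasing
degree sequence `α`, then for every realization `G` of `α` and every vertex set
`S` containing `i` and `j`, the edge `{i,j}` is forced for the degree sequence of
the induced subgraph `G[S]`: every simple graph `H` whose edges lie within `S` and
in which every vertex `v ∈ S` has the same degree as in `G[S]` (namely
`|N_G(v) ∩ S|`) contains the edge `{i,j}`. -/
theorem forced_in_induced_subgraph {n : ℕ} (α : Fin n → ℕ)
    (hα : Antitone α) (hb : ∀ v, α v ≤ n - 1) (hg : Graphic α)
    (i j : Fin n) (hij : i ≠ j) (hf : ForcedEdge α i j)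
    (G : SimpleGraph (Fin n)) (hG : IsRealization α G)
    (S : Set (Fin n)) (hiS : i ∈ S) (hjS : j ∈ S) :
    ∀ H : SimpleGraph (Fin n),
      (∀ v w : Fin n, H.Adj v w → v ∈ S ∧ w ∈ S) →
      (∀ v ∈ S, (H.neighborSet v).ncard = (G.neighborSet v ∩ S).ncard) →
      H.Adj i j := by
  intro H hHS hHdeg
  set G' : SimpleGraph (Fin n) :=
    { Adj := fun v w => H.Adj v w ∨ (G.Adj v w ∧ ¬ (v ∈ S ∧ w ∈ S))
      symm := by
        refine ⟨?_⟩
        intro v w h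
        rcases h with h | ⟨h1, h2⟩
        · exact Or.inl h.symm
        · exact Or.inr ⟨h1.symm, fun ⟨a, b⟩ => h2 ⟨b, a⟩⟩
      loopless := by
        refine ⟨?_⟩
        intro v h
        rcases h with h | ⟨h1, _⟩
        · exact H.irrefl h
        · exact G.irrefl h1 } with hG'
  have hreal : IsRealization α G' := by
    intro v
    by_cases hv : v ∈ S
    · have hset : G'.neighborSet v = H.neighborSet v ∪ (G.neighborSet v \ S) := by
        ext w
        simp only [SimpleGraph.mem_neighborSet, hG', Set.mem_union, Set.mem_diff]
        constructor
        · rintro (h | ⟨h1, h2⟩)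
          · exact Or.inl h
          · exact Or.inr ⟨h1, fun hw => h2 ⟨hv, hw⟩⟩
        · rintro (h | ⟨h1, h2⟩)
          · exact Or.inl h
          · exact Or.inr ⟨h1, fun ⟨_, hw⟩ => h2 hw⟩
      have hdisj : Disjoint (H.neighborSet v) (G.neighborSet v \ S) := by
        rw [Set.disjoint_left]
        intro w hw hw'
        exact hw'.2 ((hHS v w hw).2)
      rw [hset, Set.ncard_union_eq hdisj (Set.toFinite _) (Set.toFinite _),
        hHdeg v hv]
      have : (G.neighborSet v ∩ S).ncard + (G.neighborSet v \ S).ncard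
          = (G.neighborSet v).ncard := by
        have hd : Disjoint (G.neighborSet v ∩ S) (G.neighborSet v \ S) := by
          rw [Set.disjoint_left]
          intro w hw hw'
          exact hw'.2 hw.2
        rw [← Set.ncard_union_eq hd (Set.toFinite _) (Set.toFinite _),
          Set.inter_union_diff]
      rw [this, hG v]
    · have hset : G'.neighborSet v = G.neighborSet v := by
        ext w
        simp only [SimpleGraph.mem_neighborSet, hG']
        constructor
        · rintro (h | ⟨h1, _⟩)
          · exact absurd ((hHS v w h).1) hv
          · exact h1
        · intro h
          exact Or.inr ⟨h, fun ⟨a, _⟩ => hv a⟩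
      rw [hset, hG v]
  have hadj := hf G' hreal
  rcases hadj with h | ⟨_, h2⟩
  · exact h
  · exact absurd ⟨hiS, hjS⟩ h2
end

section
/- Let α be a graphic degree sequence of length n. If the edge {i,j} (with i ≠ j) is forced for α, then for all indices p, q with 1 ≤ p ≤ i, 1 ≤ q ≤ j and p ≠ q, the edge {p,q} is also forced for α. -/
lemma switch_graph {n : ℕ} (G : SimpleGraph (Fin n)) {a b c d : Fin n}
    (hab : a ≠ b) (hac : a ≠ c) (had1 : a ≠ d) (hbc1 : b ≠ c) (hbd1 : b ≠ d) (hcd : c ≠ d)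
    (had : G.Adj a d) (hbc : G.Adj b c) (hnac : ¬ G.Adj a c) (hnbd : ¬ G.Adj b d) :
    ∃ G' : SimpleGraph (Fin n),
      (∀ x, (G'.neighborSet x).ncard = (G.neighborSet x).ncard) ∧ ¬ G'.Adj b c := by
  classical
  set E' : Set (Sym2 (Fin n)) := (G.edgeSet \ {s(a,d), s(b,c)}) ∪ {s(a,c), s(b,d)} with hE'
  have hxyne : ∀ x y : Fin n, s(x,y) = s(a,c) ∨ s(x,y) = s(b,d) → x ≠ y := by
    rintro x y (h | h) rfl
    · rw [Sym2.eq_iff] at h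
      rcases h with ⟨rfl, rfl⟩ | ⟨rfl, rfl⟩ <;> exact hac rfl
    · rw [Sym2.eq_iff] at h
      rcases h with ⟨rfl, rfl⟩ | ⟨rfl, rfl⟩ <;> exact hbd1 rfl
  have key : ∀ x y, (SimpleGraph.fromEdgeSet E').Adj x y ↔
      ((G.Adj x y ∧ s(x,y) ≠ s(a,d) ∧ s(x,y) ≠ s(b,c)) ∨ (s(x,y) = s(a,c) ∨ s(x,y) = s(b,d))) := by
    intro x y
    rw [SimpleGraph.fromEdgeSet_adj]
    simp only [hE', Set.mem_union, Set.mem_diff, SimpleGraph.mem_edgeSet,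
      Set.mem_insert_iff, Set.mem_singleton_iff]
    constructor
    · rintro ⟨h, _⟩; tauto
    · intro h
      refine ⟨by tauto, ?_⟩
      rcases h with ⟨hadj, _, _⟩ | h
      · exact hadj.ne
      · exact hxyne x y h
  have key2 : ∀ x y, (SimpleGraph.fromEdgeSet E').Adj x y ↔
      ((G.Adj x y ∧ ¬(x = a ∧ y = d) ∧ ¬(x = d ∧ y = a) ∧ ¬(x = b ∧ y = c) ∧ ¬(x = c ∧ y = b))
        ∨ ((x = a ∧ y = c) ∨ (x = c ∧ y = a) ∨ (x = b ∧ y = d) ∨ (x = d ∧ y = b))) := by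
    intro x y
    rw [key]
    simp only [Ne, Sym2.eq_iff, not_or, or_assoc, and_assoc]
  have hcount : ∀ (s : Set (Fin n)) (r t : Fin n), r ∈ s → t ∉ s →
      (insert t (s \ {r})).ncard = s.ncard := by
    intro s r t hr ht
    rw [Set.ncard_insert_of_notMem (fun h => ht h.1),
      Set.ncard_diff_singleton_add_one hr]
  refine ⟨SimpleGraph.fromEdgeSet E', ?_, ?_⟩
  · intro x
    by_cases hxa : x = a
    · subst hxa
      have hN : (SimpleGraph.fromEdgeSet E').neighborSet x = insert c (G.neighborSet x \ {d}) := by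
        ext y
        simp only [SimpleGraph.mem_neighborSet, key2, Set.mem_insert_iff, Set.mem_diff,
          Set.mem_singleton_iff]
        constructor
        · rintro (⟨h, h1, _, _, _⟩ | ⟨_, rfl⟩ | ⟨h', rfl⟩ | ⟨h', rfl⟩ | ⟨h', rfl⟩)
          · exact Or.inr ⟨h, fun hyd => h1 ⟨trivial, hyd⟩⟩
          · exact Or.inl rfl
          · exact absurd h' hac
          · exact absurd h' hab
          · exact absurd h' had1
        · rintro (rfl | ⟨h, hyd⟩)
          · exact Or.inr (Or.inl ⟨trivial, rfl⟩)
          · exact Or.inl ⟨h, fun hh => hyd hh.2, fun hh => had1 hh.1, fun hh => hab hh.1,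
              fun hh => hac hh.1⟩
      rw [hN, hcount (G.neighborSet x) d c had hnac]
    · by_cases hxb : x = b
      · subst hxb
        have hN : (SimpleGraph.fromEdgeSet E').neighborSet x
            = insert d (G.neighborSet x \ {c}) := by
          ext y
          simp only [SimpleGraph.mem_neighborSet, key2, Set.mem_insert_iff, Set.mem_diff,
            Set.mem_singleton_iff]
          constructor
          · rintro (⟨h, _, _, h3, _⟩ | ⟨h', rfl⟩ | ⟨h', rfl⟩ | ⟨_, rfl⟩ | ⟨h', rfl⟩)
            · exact Or.inr ⟨h, fun hyc => h3 ⟨trivial, hyc⟩⟩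
            · exact absurd h'.symm hab
            · exact absurd h' hbc1
            · exact Or.inl rfl
            · exact absurd h' hbd1
          · rintro (rfl | ⟨h, hyc⟩)
            · exact Or.inr (Or.inr (Or.inr (Or.inl ⟨trivial, rfl⟩)))
            · exact Or.inl ⟨h, fun hh => hab hh.1.symm, fun hh => hbd1 hh.1,
                fun hh => hyc hh.2, fun hh => hbc1 hh.1⟩
        rw [hN, hcount (G.neighborSet x) c d hbc hnbd]
      · by_cases hxc : x = c
        · subst hxc
          have hN : (SimpleGraph.fromEdgeSet E').neighborSet x
              = insert a (G.neighborSet x \ {b}) := by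
            ext y
            simp only [SimpleGraph.mem_neighborSet, key2, Set.mem_insert_iff, Set.mem_diff,
              Set.mem_singleton_iff]
            constructor
            · rintro (⟨h, _, _, _, h4⟩ | ⟨h', rfl⟩ | ⟨_, rfl⟩ | ⟨h', rfl⟩ | ⟨h', rfl⟩)
              · exact Or.inr ⟨h, fun hyb => h4 ⟨trivial, hyb⟩⟩
              · exact absurd h'.symm hac
              · exact Or.inl rfl
              · exact absurd h'.symm hbc1
              · exact absurd h' hcd
            · rintro (rfl | ⟨h, hyb⟩)
              · exact Or.inr (Or.inr (Or.inl ⟨trivial, rfl⟩))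
              · exact Or.inl ⟨h, fun hh => hac hh.1.symm, fun hh => hcd hh.1,
                  fun hh => hbc1 hh.1.symm, fun hh => hyb hh.2⟩
          rw [hN, hcount (G.neighborSet x) b a hbc.symm (fun h => hnac (SimpleGraph.adj_symm G h))]
        · by_cases hxd : x = d
          · subst hxd
            have hN : (SimpleGraph.fromEdgeSet E').neighborSet x
                = insert b (G.neighborSet x \ {a}) := by
              ext y
              simp only [SimpleGraph.mem_neighborSet, key2, Set.mem_insert_iff, Set.mem_diff,
                Set.mem_singleton_iff]
              constructor
              · rintro (⟨h, _, h2, _, _⟩ | ⟨h', rfl⟩ | ⟨h', rfl⟩ | ⟨h', rfl⟩ | ⟨_, rfl⟩)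
                · exact Or.inr ⟨h, fun hya => h2 ⟨trivial, hya⟩⟩
                · exact absurd h'.symm had1
                · exact absurd h'.symm hcd
                · exact absurd h'.symm hbd1
                · exact Or.inl rfl
              · rintro (rfl | ⟨h, hya⟩)
                · exact Or.inr (Or.inr (Or.inr (Or.inr ⟨trivial, rfl⟩)))
                · exact Or.inl ⟨h, fun hh => had1 hh.1.symm, fun hh => hya hh.2,
                    fun hh => hbd1 hh.1.symm, fun hh => hcd hh.1.symm⟩
            rw [hN, hcount (G.neighborSet x) a b had.symm (fun h => hnbd (SimpleGraph.adj_symm G h))]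
          · have hN : (SimpleGraph.fromEdgeSet E').neighborSet x = G.neighborSet x := by
              ext y
              simp only [SimpleGraph.mem_neighborSet, key2]
              constructor
              · rintro (⟨h, _, _, _, _⟩ | ⟨rfl, _⟩ | ⟨rfl, _⟩ | ⟨rfl, _⟩ | ⟨rfl, _⟩)
                · exact h
                · exact absurd rfl hxa
                · exact absurd rfl hxc
                · exact absurd rfl hxb
                · exact absurd rfl hxd
              · intro h
                exact Or.inl ⟨h, fun hh => hxa hh.1, fun hh => hxd hh.1,
                  fun hh => hxb hh.1, fun hh => hxc hh.1⟩
            rw [hN]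
  · rw [key2]
    rintro (⟨_, _, _, h3, _⟩ | ⟨h', _⟩ | ⟨h', _⟩ | ⟨_, h'⟩ | ⟨h', _⟩)
    · exact h3 ⟨rfl, rfl⟩
    · exact hab h'.symm
    · exact hbc1 h'
    · exact hcd h'
    · exact hbd1 h'

lemma transfer_lemma {n : ℕ} (α : Fin n → ℕ) (G : SimpleGraph (Fin n)) (hG : IsRealization α G)
    (u v u' : Fin n) (huv : u ≠ v) (hnadj : ¬ G.Adj u v) (hle : α u' ≤ α u) (hu'v : u' ≠ v) :
    ∃ G', IsRealization α G' ∧ ¬ G'.Adj u' v := by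
  classical
  by_cases huu' : u' = u
  · exact ⟨G, hG, huu' ▸ hnadj⟩
  by_cases h2 : G.Adj u' v
  · -- need a switch
    set A : Set (Fin n) := G.neighborSet u \ {u'} with hA
    set B : Set (Fin n) := G.neighborSet u' \ {u} with hB
    have hdeg : (G.neighborSet u').ncard ≤ (G.neighborSet u).ncard := by
      rw [hG u, hG u']; exact hle
    have hAB : B.ncard ≤ A.ncard := by
      by_cases hadj : G.Adj u u'
      · rw [hA, hB,
          Set.ncard_diff_singleton_of_mem (show u' ∈ G.neighborSet u from hadj),
          Set.ncard_diff_singleton_of_mem (show u ∈ G.neighborSet u' from G.adj_symm hadj)]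
        exact Nat.sub_le_sub_right hdeg 1
      · rw [hA, hB,
          Set.diff_singleton_eq_self (show u' ∉ G.neighborSet u from fun h => hadj h),
          Set.diff_singleton_eq_self
            (show u ∉ G.neighborSet u' from fun h => hadj (G.adj_symm h))]
        exact hdeg
    have hvB : v ∈ B := ⟨h2, fun h => huv h.symm⟩
    have hvA : v ∉ A := fun h => hnadj h.1
    have hnsub : ¬ A ⊆ B := by
      intro hsub
      have h1 : A ⊆ B \ {v} := fun z hz => ⟨hsub hz, fun h => hvA (h ▸ hz)⟩
      have h2' : A.ncard ≤ (B \ {v}).ncard := Set.ncard_le_ncard h1 (Set.toFinite _)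
      rw [Set.ncard_diff_singleton_of_mem hvB] at h2'
      have h3 : 1 ≤ B.ncard := (Set.ncard_pos (Set.toFinite _)).mpr ⟨v, hvB⟩
      omega
    obtain ⟨w, hwA, hwB⟩ := Set.not_subset.mp hnsub
    have hwu : G.Adj u w := hwA.1
    have hwne_u' : w ≠ u' := hwA.2
    have hwne_u : w ≠ u := fun h => G.irrefl (h ▸ hwu)
    have hnw : ¬ G.Adj u' w := fun h => hwB ⟨h, hwne_u⟩
    have hwv : w ≠ v := fun h => hnadj (h ▸ hwu)
    obtain ⟨G', hpres, hnot⟩ := switch_graph G (a := u) (b := u') (c := v) (d := w)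
      (fun h => huu' h.symm) huv (Ne.symm hwne_u) hu'v (Ne.symm hwne_u') (Ne.symm hwv)
      hwu h2 hnadj hnw
    exact ⟨G', fun x => (hpres x).trans (hG x), hnot⟩
  · exact ⟨G, hG, h2⟩

/-- if the edge `{i,j}` is forced for the graphic nonincreasing
degree sequence `α`, then for all indices `p ≤ i` and `q ≤ j` with `p ≠ q`, the
edge `{p,q}` is also forced for `α`. -/
theorem forced_edges_upward_closed {n : ℕ} (α : Fin n → ℕ)
    (hα : Antitone α) (hb : ∀ v, α v ≤ n - 1) (hg : Graphic α)
    (i j : Fin n) (hij : i ≠ j) (hf : ForcedEdge α i j) :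
    ∀ p q : Fin n, p ≤ i → q ≤ j → p ≠ q → ForcedEdge α p q := by
  intro p q hpi hqj hpq G hG
  by_contra hnpq
  by_cases hiq : i = q
  · subst hiq
    have hpj : α j ≤ α p := hα (le_trans hpi hqj)
    obtain ⟨G', hG', hn⟩ := transfer_lemma α G hG p i j hpq hnpq hpj (Ne.symm hij)
    exact hn ((hf G' hG').symm)
  · obtain ⟨G1, hG1, hn1⟩ := transfer_lemma α G hG p q i hpq hnpq (hα hpi) hiq
    have hn1' : ¬ G1.Adj q i := fun h => hn1 h.symm
    obtain ⟨G2, hG2, hn2⟩ := transfer_lemma α G1 hG1 q i j (Ne.symm hiq) hn1' (hα hqj)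
      (Ne.symm hij)
    exact hn2 ((hf G2 hG2).symm)
end

section
/- Let α be a graphic degree sequence of length n ≥ 2. If α has at least one forced edge, then the edge {1,2} between the two vertices of largest degree is forced for α. -/
variable {n : ℕ}

def swapAdj (G : SimpleGraph (Fin n)) (i j k x : Fin n) (a b : Fin n) : Prop :=
  (G.Adj a b ∧ ¬((a = i ∧ b = j) ∨ (a = j ∧ b = i)) ∧ ¬((a = k ∧ b = x) ∨ (a = x ∧ b = k))) ∨
    (a = k ∧ b = j) ∨ (a = j ∧ b = k) ∨ (a = i ∧ b = x) ∨ (a = x ∧ b = i)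

def swapGraph (G : SimpleGraph (Fin n)) (i j k x : Fin n)
    (hkj : k ≠ j) (hix : i ≠ x) : SimpleGraph (Fin n) where
  Adj := swapAdj G i j k x
  symm := by
    constructor
    intro a b h
    have hc := G.adj_comm a b
    unfold swapAdj at *
    tauto
  loopless := by
    constructor
    intro a h
    rcases h with ⟨h1, _, _⟩ | ⟨h1, h2⟩ | ⟨h1, h2⟩ | ⟨h1, h2⟩ | ⟨h1, h2⟩
    · exact G.loopless.irrefl a h1
    · exact hkj (h1 ▸ h2 ▸ rfl)
    · exact hkj (h2 ▸ h1 ▸ rfl)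
    · exact hix (h1 ▸ h2 ▸ rfl)
    · exact hix (h2 ▸ h1 ▸ rfl)

variable {G : SimpleGraph (Fin n)} {i j k x : Fin n}

lemma ns_i (hik : i ≠ k) (hix : i ≠ x) (hkj : k ≠ j) (hij : G.Adj i j)
    (hGix : ¬ G.Adj i x) :
    (swapGraph G i j k x hkj hix).neighborSet i = insert x (G.neighborSet i \ {j}) := by
  have hij' := hij.ne
  ext u
  simp only [SimpleGraph.mem_neighborSet, swapGraph, swapAdj, Set.mem_insert_iff,
    Set.mem_diff, Set.mem_singleton_iff]
  constructor
  · rintro (⟨h1, h2, h3⟩ | ⟨h1, h2⟩ | ⟨h1, h2⟩ | ⟨h1, h2⟩ | ⟨h1, h2⟩) <;> aesop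
  · rintro (rfl | ⟨h1, h2⟩) <;> aesop

lemma ns_k (hij : G.Adj i j) (hkx : G.Adj k x) (hGkj : ¬ G.Adj k j) (hGix : ¬ G.Adj i x)
    (hik : i ≠ k) (hjx : j ≠ x) (hkj : k ≠ j) (hix : i ≠ x) :
    (swapGraph G i j k x hkj hix).neighborSet k = insert j (G.neighborSet k \ {x}) := by
  have h1 := hij.ne
  have h2 := hkx.ne
  ext u
  simp only [SimpleGraph.mem_neighborSet, swapGraph, swapAdj, Set.mem_insert_iff,
    Set.mem_diff, Set.mem_singleton_iff]
  constructor
  · rintro (⟨h1, h2, h3⟩ | h | h | h | h) <;> aesop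
  · rintro (rfl | ⟨h1, h2⟩) <;> aesop

lemma ns_j (hij : G.Adj i j) (hkx : G.Adj k x) (hGkj : ¬ G.Adj k j) (hGix : ¬ G.Adj i x)
    (hik : i ≠ k) (hjx : j ≠ x) (hkj : k ≠ j) (hix : i ≠ x) :
    (swapGraph G i j k x hkj hix).neighborSet j = insert k (G.neighborSet j \ {i}) := by
  have h1 := hij.ne
  have h2 := hkx.ne
  have hGjk : ¬ G.Adj j k := fun h => hGkj h.symm
  ext u
  simp only [SimpleGraph.mem_neighborSet, swapGraph, swapAdj, Set.mem_insert_iff,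
    Set.mem_diff, Set.mem_singleton_iff]
  constructor
  · rintro (⟨h1, h2, h3⟩ | h | h | h | h) <;> aesop
  · rintro (rfl | ⟨h1, h2⟩) <;> aesop

lemma ns_x (hij : G.Adj i j) (hkx : G.Adj k x) (hGkj : ¬ G.Adj k j) (hGix : ¬ G.Adj i x)
    (hik : i ≠ k) (hjx : j ≠ x) (hkj : k ≠ j) (hix : i ≠ x) :
    (swapGraph G i j k x hkj hix).neighborSet x = insert i (G.neighborSet x \ {k}) := by
  have h1 := hij.ne
  have h2 := hkx.ne
  have hGxi : ¬ G.Adj x i := fun h => hGix h.symm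
  ext u
  simp only [SimpleGraph.mem_neighborSet, swapGraph, swapAdj, Set.mem_insert_iff,
    Set.mem_diff, Set.mem_singleton_iff]
  constructor
  · rintro (⟨h1, h2, h3⟩ | h | h | h | h) <;> aesop
  · rintro (rfl | ⟨h1, h2⟩) <;> aesop

lemma ns_other (hkj : k ≠ j) (hix : i ≠ x) {v : Fin n}
    (hvi : v ≠ i) (hvj : v ≠ j) (hvk : v ≠ k) (hvx : v ≠ x) :
    (swapGraph G i j k x hkj hix).neighborSet v = G.neighborSet v := by
  ext u
  simp only [SimpleGraph.mem_neighborSet, swapGraph, swapAdj]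
  constructor
  · rintro (⟨h1, h2, h3⟩ | h | h | h | h) <;> aesop
  · intro h
    left
    aesop

lemma swap_not_adj (hkj : k ≠ j) (hix : i ≠ x) (hij' : i ≠ j) (hik : i ≠ k) (hjx : j ≠ x) :
    ¬ (swapGraph G i j k x hkj hix).Adj i j := by
  rintro (⟨h1, h2, h3⟩ | h | h | h | h) <;> aesop

lemma swap_isRealization {α : Fin n → ℕ} (hG : IsRealization α G)
    (hij : G.Adj i j) (hkx : G.Adj k x) (hGkj : ¬ G.Adj k j) (hGix : ¬ G.Adj i x)
    (hik : i ≠ k) (hjx : j ≠ x) (hkj : k ≠ j) (hix : i ≠ x) :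
    IsRealization α (swapGraph G i j k x hkj hix) := by
  have hGjk : ¬ G.Adj j k := fun h => hGkj h.symm
  have hGxi : ¬ G.Adj x i := fun h => hGix h.symm
  have mij : j ∈ G.neighborSet i := hij
  have mji : i ∈ G.neighborSet j := hij.symm
  have mkx : x ∈ G.neighborSet k := hkx
  have mxk : k ∈ G.neighborSet x := hkx.symm
  intro v
  by_cases hvi : v = i
  · subst hvi
    rw [ns_i hik hix hkj hij hGix, Set.ncard_insert_of_notMem (by simp [hGix]),
      Set.ncard_diff_singleton_add_one mij]
    exact hG v
  by_cases hvj : v = j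
  · subst hvj
    rw [ns_j hij hkx hGkj hGix hik hjx hkj hix,
      Set.ncard_insert_of_notMem (by simp [hGjk]),
      Set.ncard_diff_singleton_add_one mji]
    exact hG v
  by_cases hvk : v = k
  · subst hvk
    rw [ns_k hij hkx hGkj hGix hik hjx hkj hix,
      Set.ncard_insert_of_notMem (by simp [hGkj]),
      Set.ncard_diff_singleton_add_one mkx]
    exact hG v
  by_cases hvx : v = x
  · subst hvx
    rw [ns_x hij hkx hGkj hGix hik hjx hkj hix,
      Set.ncard_insert_of_notMem (by simp [hGxi]),
      Set.ncard_diff_singleton_add_one mxk]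
    exact hG v
  · rw [ns_other hkj hix hvi hvj hvk hvx]
    exact hG v

lemma exists_partner {α : Fin n → ℕ} (hG : IsRealization α G)
    (hdeg : α i ≤ α k) (hij : G.Adj i j) (hGkj : ¬ G.Adj k j) (hkj : k ≠ j) (hik : i ≠ k) :
    ∃ x : Fin n, G.Adj k x ∧ ¬ G.Adj i x ∧ i ≠ x ∧ j ≠ x := by
  classical
  have hdi : (G.neighborFinset i).card = α i := by
    rw [SimpleGraph.neighborFinset, ← Set.ncard_eq_toFinset_card']
    exact hG i
  have hdk : (G.neighborFinset k).card = α k := by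
    rw [SimpleGraph.neighborFinset, ← Set.ncard_eq_toFinset_card']
    exact hG k
  set A := (G.neighborFinset k).erase i with hA
  set B := (G.neighborFinset i).erase k with hB
  have hcard : B.card ≤ A.card := by
    by_cases hadj : G.Adj i k
    · rw [hA, hB, Finset.card_erase_of_mem (by simpa using hadj),
        Finset.card_erase_of_mem (by simpa using hadj.symm)]
      omega
    · rw [hA, hB, Finset.erase_eq_of_notMem (by simpa using hadj),
        Finset.erase_eq_of_notMem (by simpa using fun h : G.Adj k i => hadj h.symm)]
      omega
  have hjB : j ∈ B := by
    rw [hB]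
    exact Finset.mem_erase.2 ⟨fun h => hkj h.symm, by simpa using hij⟩
  have hjA : j ∉ A := by
    rw [hA]
    simp [hGkj]
  have h1 : (B \ A).Nonempty := ⟨j, Finset.mem_sdiff.2 ⟨hjB, hjA⟩⟩
  have h2 : 1 ≤ (B \ A).card := Finset.card_pos.2 h1
  have e1 : (A ∩ B).card + (A \ B).card = A.card := Finset.card_inter_add_card_sdiff A B
  have e2 : (B ∩ A).card + (B \ A).card = B.card := Finset.card_inter_add_card_sdiff B A
  have e3 : (A ∩ B).card = (B ∩ A).card := by rw [Finset.inter_comm]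
  have h3 : (A \ B).Nonempty := Finset.card_pos.1 (by omega)
  obtain ⟨x, hx⟩ := h3
  rw [Finset.mem_sdiff, hA, hB, Finset.mem_erase, Finset.mem_erase] at hx
  obtain ⟨⟨hxi, hxk⟩, hxB⟩ := hx
  rw [SimpleGraph.mem_neighborFinset] at hxk
  have hxnk : x ≠ k := fun h => G.loopless.irrefl k (h ▸ hxk)
  refine ⟨x, hxk, ?_, fun h => hxi h.symm, ?_⟩
  · intro hax
    exact hxB ⟨hxnk, by simpa using hax⟩
  · intro h
    exact hGkj (h ▸ hxk)

lemma forced_symm {α : Fin n → ℕ} {i j : Fin n} (h : ForcedEdge α i j) : ForcedEdge α j i :=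
  fun G hG => (h G hG).symm

lemma forced_shift_left {α : Fin n → ℕ} {i j k : Fin n} (hf : ForcedEdge α i j)
    (hdeg : α i ≤ α k) (hkj : k ≠ j) (hik : i ≠ k) :
    ForcedEdge α k j := by
  intro G hG
  by_contra hGkj
  have hij : G.Adj i j := hf G hG
  obtain ⟨x, hkx, hGix, hix, hjx⟩ := exists_partner hG hdeg hij hGkj hkj hik
  have hG' := swap_isRealization hG hij hkx hGkj hGix hik hjx hkj hix
  exact swap_not_adj hkj hix hij.ne hik hjx (hf _ hG')

private theorem first_edge_forced_aux {n : ℕ} (hn : 2 ≤ n) (α : Fin n → ℕ)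
    (hα : Antitone α)
    (h : ∃ i j : Fin n, i ≠ j ∧ ForcedEdge α i j) :
    ForcedEdge α ⟨0, Nat.lt_of_lt_of_le Nat.two_pos hn⟩ ⟨1, Nat.lt_of_lt_of_le Nat.one_lt_two hn⟩ := by
  obtain ⟨i, j, hij, hf⟩ := h
  set v0 : Fin n := ⟨0, by omega⟩ with hv0
  set v1 : Fin n := ⟨1, by omega⟩ with hv1
  have hv01 : v0 ≠ v1 := by simp [hv0, hv1, Fin.ext_iff]
  -- step 1: get a forced edge with endpoint v0
  have step1 : ∃ j' : Fin n, j' ≠ v0 ∧ ForcedEdge α v0 j' := by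
    by_cases hi0 : i = v0
    · exact ⟨j, fun h => hij (hi0 ▸ h ▸ rfl), hi0 ▸ hf⟩
    by_cases hj0 : j = v0
    · exact ⟨i, fun h => hij (h ▸ hj0 ▸ rfl), hj0 ▸ forced_symm hf⟩
    · refine ⟨j, hj0, ?_⟩
      have hd : α i ≤ α v0 := hα (by simp [hv0, Fin.le_def])
      exact forced_shift_left hf hd (fun h => hj0 h.symm) hi0
  obtain ⟨j', hj0, hf0⟩ := step1
  by_cases hj1 : j' = v1
  · exact hj1 ▸ hf0
  · have hd : α j' ≤ α v1 := by
      apply hα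
      have : (j' : ℕ) ≠ 0 := fun h => hj0 (Fin.ext h)
      simp only [hv1, Fin.le_def]
      omega
    have := forced_shift_left (forced_symm hf0) hd hv01.symm hj1
    exact forced_symm this

/-- if a graphic nonincreasing degree sequence `α` of length `n ≥ 2`
has at least one forced edge, then the edge `{1,2}` between the two vertices of
largest degree is forced for `α`. -/
theorem first_edge_forced {n : ℕ} (hn : 2 ≤ n) (α : Fin n → ℕ)
    (hα : Antitone α) (hb : ∀ v, α v ≤ n - 1) (hg : Graphic α)
    (h : ∃ i j : Fin n, i ≠ j ∧ ForcedEdge α i j) :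
    ForcedEdge α ⟨0, by omega⟩ ⟨1, by omega⟩ := by
  exact first_edge_forced_aux hn α hα h
end

section
/- Let α and β be graphic degree sequences of length n with α ≽ β (α majorizes β). Then every forced edge of β is a forced edge of α, and every forbidden edge of β is a forbidden edge of α: F(α) ⊇ F(β) and B(α) ⊇ B(β). -/
lemma step_lemma {n : ℕ} (G : SimpleGraph (Fin n)) (p q i j : Fin n) (hpq : p ≠ q)
    (hij : i ≠ j)
    (hdeg : (G.neighborSet q).ncard + 2 ≤ (G.neighborSet p).ncard) :
    ∃ H : SimpleGraph (Fin n),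
      ((H.neighborSet p).ncard + 1 = (G.neighborSet p).ncard) ∧
      ((H.neighborSet q).ncard = (G.neighborSet q).ncard + 1) ∧
      (∀ v, v ≠ p → v ≠ q → (H.neighborSet v).ncard = (G.neighborSet v).ncard) ∧
      (H.Adj i j ↔ G.Adj i j) := by
  classical
  set Np := G.neighborSet p with hNp
  set Nq := G.neighborSet q with hNq
  set S : Set (Fin n) := Np ∩ insert q Nq with hS
  have hScard : S.ncard ≤ Nq.ncard := by
    by_cases hq : q ∈ Np
    · have hpNq : p ∈ Nq := G.adj_symm hq
      have hsub : S ⊆ insert q (Nq \ {p}) := by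
        rintro y ⟨hy1, hy2⟩
        rcases hy2 with rfl | hy2
        · exact Set.mem_insert _ _
        · by_cases hyq : y = q
          · exact hyq ▸ Set.mem_insert _ _
          · refine Set.mem_insert_of_mem _ ⟨hy2, fun hyp => ?_⟩
            rw [Set.mem_singleton_iff] at hyp
            rw [hyp, hNp, SimpleGraph.mem_neighborSet] at hy1
            exact G.loopless.irrefl p hy1
      calc S.ncard ≤ (insert q (Nq \ {p})).ncard := Set.ncard_le_ncard hsub
        _ ≤ (Nq \ {p}).ncard + 1 := Set.ncard_insert_le _ _
        _ = Nq.ncard := Set.ncard_diff_singleton_add_one hpNq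
    · have hsub : S ⊆ Nq := by
        rintro y ⟨hy1, hy2⟩
        rcases hy2 with rfl | hy2
        · exact absurd hy1 hq
        · exact hy2
      exact Set.ncard_le_ncard hsub
  have hX : 1 < (Np \ insert q Nq).ncard := by
    have h1 : Np.ncard ≤ (Np \ insert q Nq).ncard + S.ncard := by
      have h2 := Set.ncard_le_ncard_diff_add_ncard Np S
      have he : Np \ S = Np \ insert q Nq := by
        ext y; simp only [hS, Set.mem_diff, Set.mem_inter_iff]; tauto
      rwa [he] at h2
    omega
  obtain ⟨a, b, ha, hb, hab⟩ := (Set.one_lt_ncard_iff (Set.toFinite _)).mp hX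
  have hgood : ∃ x, x ∈ Np \ insert q Nq ∧ ¬(s(p,x) = s(i,j) ∨ s(q,x) = s(i,j)) := by
    by_contra hcon
    push_neg at hcon
    have hba := hcon a ha
    have hbb := hcon b hb
    obtain ⟨haN, haq⟩ := ha
    obtain ⟨hbN, hbq⟩ := hb
    rw [hNp, SimpleGraph.mem_neighborSet] at haN hbN
    have hap : a ≠ p := fun h => G.loopless.irrefl p (h ▸ haN)
    have hbp : b ≠ p := fun h => G.loopless.irrefl p (h ▸ hbN)
    have haq' : a ≠ q := fun h => haq (h ▸ Set.mem_insert _ _)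
    have hbq' : b ≠ q := fun h => hbq (h ▸ Set.mem_insert _ _)
    rw [Sym2.eq_iff, Sym2.eq_iff] at hba hbb
    rcases hba with (⟨h1,h2⟩|⟨h1,h2⟩)|(⟨h1,h2⟩|⟨h1,h2⟩) <;>
      rcases hbb with (⟨h3,h4⟩|⟨h3,h4⟩)|(⟨h3,h4⟩|⟨h3,h4⟩) <;>
      subst_vars <;> simp_all
  obtain ⟨x, ⟨hxNp, hxq⟩, hxbad⟩ := hgood
  push_neg at hxbad
  obtain ⟨hxbad1, hxbad2⟩ := hxbad
  have hxq' : x ≠ q := fun h => hxq (h ▸ Set.mem_insert _ _)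
  have hxNq : x ∉ Nq := fun h => hxq (Set.mem_insert_of_mem _ h)
  rw [hNp, SimpleGraph.mem_neighborSet] at hxNp
  rw [hNq, SimpleGraph.mem_neighborSet] at hxNq
  have hxp : x ≠ p := fun h => G.loopless.irrefl p (h ▸ hxNp)
  have hsymm : ∀ c d : Fin n, (fun c d => s(c,d) = s(q,x) ∨ (G.Adj c d ∧ s(c,d) ≠ s(p,x))) c d →
      (fun c d => s(c,d) = s(q,x) ∨ (G.Adj c d ∧ s(c,d) ≠ s(p,x))) d c := by
    intro c d hcd
    have hsw : s(d,c) = s(c,d) := Sym2.eq_swap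
    rcases hcd with h | ⟨h1, h2⟩
    · left; rw [hsw]; exact h
    · right; exact ⟨G.adj_symm h1, by rw [hsw]; exact h2⟩
  have hloop : ∀ c : Fin n, ¬ ((fun c d => s(c,d) = s(q,x) ∨ (G.Adj c d ∧ s(c,d) ≠ s(p,x))) c c) := by
    intro c hc
    rcases hc with h | ⟨h1, _⟩
    · rw [Sym2.eq_iff] at h
      rcases h with ⟨rfl,rfl⟩|⟨rfl,rfl⟩ <;> exact hxq' rfl
    · exact G.loopless.irrefl c h1
  set H : SimpleGraph (Fin n) := ⟨fun c d => s(c,d) = s(q,x) ∨ (G.Adj c d ∧ s(c,d) ≠ s(p,x)), ⟨@hsymm⟩, ⟨hloop⟩⟩ with hH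
  have hHadj : ∀ c d, H.Adj c d ↔ (s(c,d) = s(q,x) ∨ (G.Adj c d ∧ s(c,d) ≠ s(p,x))) := fun _ _ => Iff.rfl
  have hGsymm : ∀ c d : Fin n, G.Adj c d → G.Adj d c := fun _ _ h => G.adj_symm h
  have hGpx : G.Adj x p := G.adj_symm hxNp
  have hGqx : ¬ G.Adj x q := fun h => hxNq (G.adj_symm h)
  have hNHp : H.neighborSet p = Np \ {x} := by
    ext w
    simp only [SimpleGraph.mem_neighborSet, hHadj, Set.mem_diff, Set.mem_singleton_iff, hNp]
    constructor
    · rintro (h | ⟨h1, h2⟩)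
      · rcases Sym2.eq_iff.mp h with ⟨rfl,rfl⟩|⟨rfl,rfl⟩
        · exact absurd rfl hpq
        · exact absurd rfl hxp
      · exact ⟨h1, fun hw => h2 (Sym2.eq_iff.mpr (Or.inl ⟨rfl, hw⟩))⟩
    · rintro ⟨h1, h2⟩
      refine Or.inr ⟨h1, fun hw => ?_⟩
      rcases Sym2.eq_iff.mp hw with ⟨-,rfl⟩|⟨rfl,rfl⟩
      · exact h2 rfl
      · exact hxp rfl
  have hNHq : H.neighborSet q = insert x Nq := by
    ext w
    simp only [SimpleGraph.mem_neighborSet, hHadj, Set.mem_insert_iff, hNq]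
    constructor
    · rintro (h | ⟨h1, h2⟩)
      · rcases Sym2.eq_iff.mp h with ⟨-,rfl⟩|⟨rfl,rfl⟩
        · exact Or.inl rfl
        · exact absurd rfl hxq'
      · exact Or.inr h1
    · rintro (rfl | hw)
      · exact Or.inl (Sym2.eq_iff.mpr (Or.inl ⟨rfl, rfl⟩))
      · refine Or.inr ⟨hw, fun hc => ?_⟩
        rcases Sym2.eq_iff.mp hc with ⟨rfl,rfl⟩|⟨hqx,-⟩
        · exact absurd rfl hpq
        · exact hxq' hqx.symm
  have hNHx : H.neighborSet x = insert q (G.neighborSet x \ {p}) := by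
    ext w
    simp only [SimpleGraph.mem_neighborSet, hHadj, Set.mem_insert_iff, Set.mem_diff,
      Set.mem_singleton_iff]
    constructor
    · rintro (h | ⟨h1, h2⟩)
      · rcases Sym2.eq_iff.mp h with ⟨rfl,rfl⟩|⟨-,rfl⟩
        · exact absurd rfl hxq'
        · exact Or.inl rfl
      · exact Or.inr ⟨h1, fun hw => h2 (Sym2.eq_iff.mpr (Or.inr ⟨rfl, hw⟩))⟩
    · rintro (rfl | ⟨h1, h2⟩)
      · exact Or.inl (Sym2.eq_iff.mpr (Or.inr ⟨rfl, rfl⟩))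
      · refine Or.inr ⟨h1, fun hc => ?_⟩
        rcases Sym2.eq_iff.mp hc with ⟨hxp2,-⟩|⟨-,hwp⟩
        · exact hxp hxp2
        · exact h2 hwp
  have hNHv : ∀ v, v ≠ p → v ≠ q → v ≠ x → H.neighborSet v = G.neighborSet v := by
    intro v hvp hvq hvx
    ext w
    simp only [SimpleGraph.mem_neighborSet, hHadj]
    constructor
    · rintro (h | ⟨h1, h2⟩)
      · rcases Sym2.eq_iff.mp h with ⟨rfl,rfl⟩|⟨rfl,rfl⟩
        · exact absurd rfl hvq
        · exact absurd rfl hvx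
      · exact h1
    · intro h1
      refine Or.inr ⟨h1, fun hc => ?_⟩
      rcases Sym2.eq_iff.mp hc with ⟨rfl,rfl⟩|⟨rfl,rfl⟩
      · exact hvp rfl
      · exact hvx rfl
  refine ⟨H, ?_, ?_, ?_, ?_⟩
  · rw [hNHp]
    exact Set.ncard_diff_singleton_add_one hxNp
  · rw [hNHq]
    exact Set.ncard_insert_of_notMem hxNq
  · intro v hvp hvq
    by_cases hvx : v = x
    · subst hvx
      have hqmem : q ∉ G.neighborSet v \ {p} := by
        rintro ⟨hq1, -⟩
        exact hxNq (G.adj_symm hq1)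
      rw [hNHx, Set.ncard_insert_of_notMem hqmem]
      exact Set.ncard_diff_singleton_add_one (G.adj_symm hxNp)
    · rw [hNHv v hvp hvq hvx]
  · rw [hHadj]
    constructor
    · rintro (h | ⟨h1, -⟩)
      · exact absurd h.symm hxbad2
      · exact h1
    · intro h1
      exact Or.inr ⟨h1, fun hh => hxbad1 hh.symm⟩

lemma key_lemma {n : ℕ} (β : Fin n → ℕ) (hβ : Antitone β) :
    ∀ N : ℕ, ∀ γ : Fin n → ℕ, (∑ v, ((γ v - β v) + (β v - γ v))) ≤ N →
      Majorizes γ β →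
      ∀ G : SimpleGraph (Fin n), IsRealization γ G →
      ∀ i j : Fin n, i ≠ j →
      ∃ H : SimpleGraph (Fin n), IsRealization β H ∧ (H.Adj i j ↔ G.Adj i j) := by
  intro N
  induction N with
  | zero =>
    intro γ hm hmaj G hG i j hij
    have hγβ : γ = β := by
      funext v
      have h0 : ((γ v - β v) + (β v - γ v)) = 0 := by
        have := Finset.sum_eq_zero_iff.mp (Nat.le_zero.mp hm) v (Finset.mem_univ v)
        exact this
      omega
    exact ⟨G, hγβ ▸ hG, Iff.rfl⟩
  | succ N ih =>
    intro γ hm hmaj G hG i j hij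
    by_cases hEq : γ = β
    · exact ⟨G, hEq ▸ hG, Iff.rfl⟩
    -- find j₀ and k₀
    have hD : (Finset.univ.filter (fun v => γ v ≠ β v)).Nonempty := by
      obtain ⟨v, hv⟩ := Function.ne_iff.mp hEq
      exact ⟨v, Finset.mem_filter.mpr ⟨Finset.mem_univ v, hv⟩⟩
    obtain ⟨j₀, hj₀mem, hj₀min⟩ : ∃ j₀ ∈ Finset.univ.filter (fun v => γ v ≠ β v),
        ∀ v ∈ Finset.univ.filter (fun v => γ v ≠ β v), j₀ ≤ v :=
      ⟨_, Finset.min'_mem _ hD, fun v hv => Finset.min'_le _ v hv⟩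
    have hj₀ne : γ j₀ ≠ β j₀ := (Finset.mem_filter.mp hj₀mem).2
    have hlow : ∀ v : Fin n, v < j₀ → γ v = β v := by
      intro v hv
      by_contra hc
      exact absurd (hj₀min v (Finset.mem_filter.mpr ⟨Finset.mem_univ v, hc⟩))
        (not_le.mpr hv)
    -- γ j₀ > β j₀
    have hgt : β j₀ < γ j₀ := by
      have h1 := hmaj.1 ((j₀ : ℕ) + 1) j₀.isLt
      set s := Finset.univ.filter (fun v : Fin n => (v : ℕ) < (j₀ : ℕ) + 1) with hsdef
      have hjs : j₀ ∈ s := Finset.mem_filter.mpr ⟨Finset.mem_univ _, Nat.lt_succ_self _⟩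
      have he : ∀ v ∈ s.erase j₀, γ v = β v := by
        intro v hv
        obtain ⟨hv1, hv2⟩ := Finset.mem_erase.mp hv
        have hv3 : (v : ℕ) < (j₀ : ℕ) + 1 := (Finset.mem_filter.mp hv2).2
        have : v < j₀ := by
          rcases lt_or_eq_of_le (Nat.lt_succ_iff.mp hv3) with h | h
          · exact h
          · exact absurd (Fin.ext h) hv1
        exact hlow v this
      have h2 : ∑ v ∈ s.erase j₀, γ v + γ j₀ = ∑ v ∈ s, γ v := Finset.sum_erase_add s γ hjs
      have h3 : ∑ v ∈ s.erase j₀, β v + β j₀ = ∑ v ∈ s, β v := Finset.sum_erase_add s β hjs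
      have h4 : ∑ v ∈ s.erase j₀, γ v = ∑ v ∈ s.erase j₀, β v :=
        Finset.sum_congr rfl he
      omega
    have hE : (Finset.univ.filter (fun v => γ v < β v)).Nonempty := by
      by_contra hc
      rw [Finset.not_nonempty_iff_eq_empty, Finset.filter_eq_empty_iff] at hc
      have hle : ∀ v ∈ Finset.univ, β v ≤ γ v := fun v _ => not_lt.mp (hc (Finset.mem_univ v))
      have := Finset.sum_lt_sum hle ⟨j₀, Finset.mem_univ _, hgt⟩
      have h5 := hmaj.2
      omega
    obtain ⟨k₀, hk₀mem, hk₀min⟩ : ∃ k₀ ∈ Finset.univ.filter (fun v => γ v < β v),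
        ∀ v ∈ Finset.univ.filter (fun v => γ v < β v), k₀ ≤ v :=
      ⟨_, Finset.min'_mem _ hE, fun v hv => Finset.min'_le _ v hv⟩
    have hk₀lt : γ k₀ < β k₀ := (Finset.mem_filter.mp hk₀mem).2
    have hk₀low : ∀ v : Fin n, v < k₀ → β v ≤ γ v := by
      intro v hv
      by_contra hc
      exact absurd (hk₀min v (Finset.mem_filter.mpr ⟨Finset.mem_univ v, not_le.mp hc⟩))
        (not_le.mpr hv)
    have hj₀k₀ : j₀ < k₀ := by
      have h1 : j₀ ≤ k₀ :=
        hj₀min k₀ (Finset.mem_filter.mpr ⟨Finset.mem_univ _, Nat.ne_of_lt hk₀lt⟩)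
      rcases lt_or_eq_of_le h1 with h | h
      · exact h
      · rw [h] at hgt; omega
    have hne : j₀ ≠ k₀ := Fin.ne_of_lt hj₀k₀
    have hgap : γ k₀ + 2 ≤ γ j₀ := by
      have := hβ hj₀k₀.le
      omega
    -- the transferred sequence
    set γ' : Fin n → ℕ := fun v => if v = j₀ then γ j₀ - 1 else if v = k₀ then γ k₀ + 1 else γ v
      with hγ'def
    have hγ'j₀ : γ' j₀ = γ j₀ - 1 := by simp [hγ'def]
    have hγ'k₀ : γ' k₀ = γ k₀ + 1 := by simp [hγ'def, hne.symm]
    have hγ'v : ∀ v, v ≠ j₀ → v ≠ k₀ → γ' v = γ v := by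
      intro v h1 h2; simp [hγ'def, h1, h2]
    -- apply the step lemma
    have hdeg : (G.neighborSet k₀).ncard + 2 ≤ (G.neighborSet j₀).ncard := by
      rw [hG k₀, hG j₀]; exact hgap
    obtain ⟨G', hp1, hp2, hp3, hadj⟩ := step_lemma G j₀ k₀ i j hne hij hdeg
    have hG' : IsRealization γ' G' := by
      intro v
      by_cases h1 : v = j₀
      · subst h1; rw [hγ'j₀]; rw [hG v] at hp1; omega
      · by_cases h2 : v = k₀
        · subst h2; rw [hγ'k₀]; rw [hG v] at hp2; omega
        · rw [hγ'v v h1 h2, hp3 v h1 h2, hG v]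
    -- sum identity
    have hsum : ∀ s : Finset (Fin n),
        (∑ v ∈ s, γ' v) + (if j₀ ∈ s then 1 else 0)
          = (∑ v ∈ s, γ v) + (if k₀ ∈ s then 1 else 0) := by
      intro s
      have hpt : ∀ v ∈ s, γ' v + (if v = j₀ then 1 else 0) = γ v + (if v = k₀ then 1 else 0) := by
        intro v _
        by_cases h1 : v = j₀
        · subst h1; rw [hγ'j₀, if_pos rfl, if_neg hne]; omega
        · by_cases h2 : v = k₀
          · subst h2; rw [hγ'k₀, if_neg h1, if_pos rfl]
          · rw [hγ'v v h1 h2, if_neg h1, if_neg h2]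
      have h1 := Finset.sum_congr rfl hpt
      rw [Finset.sum_add_distrib, Finset.sum_add_distrib,
        Finset.sum_ite_eq' s j₀ (fun _ => 1), Finset.sum_ite_eq' s k₀ (fun _ => 1)] at h1
      exact h1
    -- majorization for γ'
    have hmaj' : Majorizes γ' β := by
      constructor
      · intro k hk
        have h1 := hmaj.1 k hk
        set s := Finset.univ.filter (fun v : Fin n => (v : ℕ) < k) with hsdef
        have hs := hsum s
        by_cases hjs : j₀ ∈ s
        · by_cases hks : k₀ ∈ s
          · rw [if_pos hjs, if_pos hks] at hs; omega
          · rw [if_pos hjs, if_neg hks] at hs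
            have hstrict : ∑ v ∈ s, β v < ∑ v ∈ s, γ v := by
              refine Finset.sum_lt_sum ?_ ⟨j₀, hjs, hgt⟩
              intro v hv
              have hv1 : (v : ℕ) < k := (Finset.mem_filter.mp hv).2
              have hk₀k : ¬ ((k₀ : ℕ) < k) := fun hc =>
                hks (Finset.mem_filter.mpr ⟨Finset.mem_univ _, hc⟩)
              have : v < k₀ := by
                have : (v : ℕ) < (k₀ : ℕ) := by omega
                exact this
              exact hk₀low v this
            omega
        · rw [if_neg hjs] at hs
          by_cases hks : k₀ ∈ s <;> [rw [if_pos hks] at hs; rw [if_neg hks] at hs] <;> omega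
      · have hs := hsum Finset.univ
        rw [if_pos (Finset.mem_univ _), if_pos (Finset.mem_univ _)] at hs
        have h2 := hmaj.2
        omega
    -- measure decreases
    have hmeas : ∑ v, ((γ' v - β v) + (β v - γ' v)) < ∑ v, ((γ v - β v) + (β v - γ v)) := by
      refine Finset.sum_lt_sum ?_ ⟨j₀, Finset.mem_univ _, ?_⟩
      · intro v _
        by_cases h1 : v = j₀
        · subst h1; rw [hγ'j₀]; omega
        · by_cases h2 : v = k₀
          · subst h2; rw [hγ'k₀]; omega
          · rw [hγ'v v h1 h2]
      · rw [hγ'j₀]; omega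
    obtain ⟨H, hH, hadj2⟩ := ih γ' (by omega) hmaj' G' hG' i j hij
    exact ⟨H, hH, hadj2.trans hadj⟩

/-- Barrus: if `α` and `β` are graphic nonincreasing degree
sequences with `α ≽ β`, then every forced edge of `β` is forced for `α` and every
forbidden edge of `β` is forbidden for `α`: `F(α) ⊇ F(β)` and `B(α) ⊇ B(β)`. -/
theorem forced_forbidden_monotone_in_majorization {n : ℕ} (α β : Fin n → ℕ)
    (hα : Antitone α) (hβ : Antitone β)
    (hαb : ∀ v, α v ≤ n - 1) (hβb : ∀ v, β v ≤ n - 1)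
    (hαg : Graphic α) (hβg : Graphic β)
    (h : Majorizes α β) :
    ∀ i j : Fin n, i ≠ j →
      (ForcedEdge β i j → ForcedEdge α i j) ∧
      (ForbiddenEdge β i j → ForbiddenEdge α i j) := by
  intro i j hij
  constructor
  · intro hf G hG
    obtain ⟨H, hH, hiff⟩ := key_lemma β hβ _ α le_rfl h G hG i j hij
    exact hiff.mp (hf H hH)
  · intro hb G hG hadj
    obtain ⟨H, hH, hiff⟩ := key_lemma β hβ _ α le_rfl h G hG i j hij
    exact hb H hH (hiff.mpr hadj)
end

section
/- Let α be a graphic degree sequence of length n and let i ≠ j be indices such that the edge {i,j} is forced for α. Then for every realization G of α, the set of vertices V − (N(i) ∪ N(j)) lying outside both the neighborhood of vertex i and the neighborhood of vertex j forms an independent set in G (no two of these vertices are adjacent). -/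
set_option maxHeartbeats 2000000


/-- if the edge `{i,j}` is forced for the graphic nonincreasing
degree sequence `α`, then in every realization `G` of `α` the vertices lying
outside `N(i) ∪ N(j)` form an independent set. -/
theorem forced_edge_gives_independent_set {n : ℕ} (α : Fin n → ℕ)
    (hα : Antitone α) (hb : ∀ v, α v ≤ n - 1) (hg : Graphic α)
    (i j : Fin n) (hij : i ≠ j) (hf : ForcedEdge α i j)
    (G : SimpleGraph (Fin n)) (hG : IsRealization α G) :
    ∀ u v : Fin n,
      u ∉ G.neighborSet i ∪ G.neighborSet j →
      v ∉ G.neighborSet i ∪ G.neighborSet j →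
      ¬ G.Adj u v := by
  intro u v hu hv huv
  have hadj : G.Adj i j := hf G hG
  simp only [Set.mem_union, SimpleGraph.mem_neighborSet] at hu hv
  push_neg at hu hv
  obtain ⟨hiu, hju⟩ := hu
  obtain ⟨hiv, hjv⟩ := hv
  have hui : u ≠ i := fun h => hju (h ▸ hadj.symm)
  have huj : u ≠ j := fun h => hiu (h ▸ hadj)
  have hvi : v ≠ i := fun h => hjv (h ▸ hadj.symm)
  have hvj : v ≠ j := fun h => hiv (h ▸ hadj)
  have huv' : u ≠ v := huv.ne
  have hui' : i ≠ u := hui.symm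
  have huj' : j ≠ u := huj.symm
  have hvi' : i ≠ v := hvi.symm
  have hvj' : j ≠ v := hvj.symm
  have huv'' : v ≠ u := huv'.symm
  have hij' : j ≠ i := hij.symm
  -- the swapped graph
  let G' : SimpleGraph (Fin n) :=
    { Adj := fun a b =>
        (G.Adj a b ∧ ¬((a = i ∧ b = j) ∨ (a = j ∧ b = i)) ∧
          ¬((a = u ∧ b = v) ∨ (a = v ∧ b = u))) ∨
        (a = i ∧ b = u) ∨ (a = u ∧ b = i) ∨ (a = j ∧ b = v) ∨ (a = v ∧ b = j)
      symm := by
        constructor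
        intro a b h
        rcases h with ⟨h1, h2, h3⟩ | h | h | h | h
        · exact Or.inl ⟨h1.symm, by tauto, by tauto⟩
        all_goals tauto
      loopless := by
        constructor
        intro a h
        rcases h with ⟨h1, _, _⟩ | ⟨h1, h2⟩ | ⟨h1, h2⟩ | ⟨h1, h2⟩ | ⟨h1, h2⟩
        · exact G.loopless.irrefl a h1
        · exact hui' (h1.symm.trans h2)
        · exact hui (h1.symm.trans h2)
        · exact hvj' (h1.symm.trans h2)
        · exact hvj (h1.symm.trans h2) }
  have hG' : IsRealization α G' := by
    intro w
    by_cases hwi : w = i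
    · subst hwi
      have hset : G'.neighborSet w = insert u (G.neighborSet w \ {j}) := by
        ext b
        simp only [SimpleGraph.mem_neighborSet, Set.mem_insert_iff, Set.mem_diff,
          Set.mem_singleton_iff]
        constructor
        · rintro (⟨h1, h2, h3⟩ | ⟨_, h2⟩ | ⟨h1, _⟩ | ⟨h1, _⟩ | ⟨h1, _⟩)
          · exact Or.inr ⟨h1, by tauto⟩
          · exact Or.inl h2
          all_goals tauto
        · rintro (rfl | ⟨h1, h2⟩)
          · tauto
          · exact Or.inl ⟨h1, by tauto, by tauto⟩
      have hmem : j ∈ G.neighborSet w := hadj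
      have hnm : u ∉ G.neighborSet w \ {j} := fun h => hiu h.1
      rw [hset, Set.ncard_insert_of_notMem hnm (Set.toFinite _),
        Set.ncard_diff_singleton_add_one hmem (Set.toFinite _)]
      exact hG w
    · by_cases hwj : w = j
      · subst hwj
        have hset : G'.neighborSet w = insert v (G.neighborSet w \ {i}) := by
          ext b
          simp only [SimpleGraph.mem_neighborSet, Set.mem_insert_iff, Set.mem_diff,
            Set.mem_singleton_iff]
          constructor
          · rintro (⟨h1, h2, h3⟩ | ⟨h1, _⟩ | ⟨h1, _⟩ | ⟨_, h2⟩ | ⟨h1, _⟩)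
            · exact Or.inr ⟨h1, by tauto⟩
            · tauto
            · tauto
            · exact Or.inl h2
            · tauto
          · rintro (rfl | ⟨h1, h2⟩)
            · tauto
            · exact Or.inl ⟨h1, by tauto, by tauto⟩
        have hmem : i ∈ G.neighborSet w := hadj.symm
        have hnm : v ∉ G.neighborSet w \ {i} := fun h => hjv h.1
        rw [hset, Set.ncard_insert_of_notMem hnm (Set.toFinite _),
          Set.ncard_diff_singleton_add_one hmem (Set.toFinite _)]
        exact hG w
      · by_cases hwu : w = u
        · subst hwu
          have hset : G'.neighborSet w = insert i (G.neighborSet w \ {v}) := by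
            ext b
            simp only [SimpleGraph.mem_neighborSet, Set.mem_insert_iff, Set.mem_diff,
              Set.mem_singleton_iff]
            constructor
            · rintro (⟨h1, h2, h3⟩ | ⟨h1, _⟩ | ⟨_, h2⟩ | ⟨h1, _⟩ | ⟨h1, _⟩)
              · exact Or.inr ⟨h1, by tauto⟩
              · tauto
              · exact Or.inl h2
              · tauto
              · tauto
            · rintro (rfl | ⟨h1, h2⟩)
              · tauto
              · exact Or.inl ⟨h1, by tauto, by tauto⟩
          have hmem : v ∈ G.neighborSet w := huv
          have hnm : i ∉ G.neighborSet w \ {v} := fun h => hiu (h.1.symm)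
          rw [hset, Set.ncard_insert_of_notMem hnm (Set.toFinite _),
            Set.ncard_diff_singleton_add_one hmem (Set.toFinite _)]
          exact hG w
        · by_cases hwv : w = v
          · subst hwv
            have hset : G'.neighborSet w = insert j (G.neighborSet w \ {u}) := by
              ext b
              simp only [SimpleGraph.mem_neighborSet, Set.mem_insert_iff, Set.mem_diff,
                Set.mem_singleton_iff]
              constructor
              · rintro (⟨h1, h2, h3⟩ | ⟨h1, _⟩ | ⟨h1, _⟩ | ⟨h1, _⟩ | ⟨_, h2⟩)
                · exact Or.inr ⟨h1, by tauto⟩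
                · tauto
                · tauto
                · tauto
                · exact Or.inl h2
              · rintro (rfl | ⟨h1, h2⟩)
                · tauto
                · exact Or.inl ⟨h1, by tauto, by tauto⟩
            have hmem : u ∈ G.neighborSet w := huv.symm
            have hnm : j ∉ G.neighborSet w \ {u} := fun h => hjv (h.1.symm)
            rw [hset, Set.ncard_insert_of_notMem hnm (Set.toFinite _),
              Set.ncard_diff_singleton_add_one hmem (Set.toFinite _)]
            exact hG w
          · have hset : G'.neighborSet w = G.neighborSet w := by
              ext b
              simp only [SimpleGraph.mem_neighborSet]
              constructor
              · rintro (⟨h1, _, _⟩ | ⟨h1, _⟩ | ⟨h1, _⟩ | ⟨h1, _⟩ | ⟨h1, _⟩)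
                · exact h1
                all_goals exact absurd h1 (by assumption)
              · intro h1
                exact Or.inl ⟨h1, by tauto, by tauto⟩
            rw [hset]; exact hG w
  have hcon : G'.Adj i j := hf G' hG'
  rcases hcon with ⟨_, h2, _⟩ | ⟨_, h⟩ | ⟨h, _⟩ | ⟨h, _⟩ | ⟨h, _⟩
  · exact h2 (Or.inl ⟨rfl, rfl⟩)
  · exact huj h.symm
  · exact hui h.symm
  · exact hij h
  · exact hvi h.symm
end
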